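/- arXiv:1308.4030 — 2 statements merged into one kernel-verified Lean document; each statement's English description precedes it below -/
import Mathlib

section
/- Let E = (H, B, {b_θ}_{θ∈Θ}) be a generalized experiment (Θ finite), λ a probability distribution on Θ, and (D, w) a classical decision problem with payoff w : Θ × D → [0,1]. Then the maximal average payoff over all B-POVMs {M_d}_{d∈D} equals inf_{b ∈ B} sup_{d ∈ D} 2^{D_max(Σ_θ λ_θ w(θ,d) b_θ ‖ b)}. -/
open Matrix ComplexOrder

variable {n : ℕ}

def Sb (b : Matrix (Fin n) (Fin n) ℂ) : Set (Matrix (Fin n) (Fin n) ℂ) :=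
  {a | a.PosSemidef ∧ (a * b).trace = 1}

def IsSection (B : Set (Matrix (Fin n) (Fin n) ℂ)) : Prop :=
  ∃ (L : Submodule ℝ (Matrix (Fin n) (Fin n) ℂ)) (b : Matrix (Fin n) (Fin n) ℂ),
    b.PosDef ∧ B = (L : Set (Matrix (Fin n) (Fin n) ℂ)) ∩ Sb b

def IsFaithfulSection (B : Set (Matrix (Fin n) (Fin n) ℂ)) : Prop :=
  IsSection B ∧ ∃ b ∈ B, b.PosDef

def dualSection (B : Set (Matrix (Fin n) (Fin n) ℂ)) : Set (Matrix (Fin n) (Fin n) ℂ) :=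
  {c | c.PosSemidef ∧ ∀ b ∈ B, (b * c).trace = 1}

/-- `2^{D_max(a‖b)} = inf{μ > 0 : a ≤ μ b}`. -/
noncomputable def expDmax (a b : Matrix (Fin n) (Fin n) ℂ) : ENNReal :=
  ⨅ (r : ℝ) (_ : 0 < r) (_ : (r • b - a).PosSemidef), ENNReal.ofReal r


namespace Stmt18Aux

local notation "Mat" => Matrix (Fin n) (Fin n) ℂ

open scoped MatrixOrder Matrix.Norms.L2Operator in
lemma psd_exists_conjTranspose_mul_self {A : Mat} (hA : A.PosSemidef) :
    ∃ C : Mat, A = Cᴴ * C := by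
  classical
  obtain ⟨C, hC⟩ := CStarAlgebra.nonneg_iff_eq_star_mul_self.mp hA.nonneg
  exact ⟨C, hC⟩

lemma zero_le_complex {z : ℂ} : 0 ≤ z ↔ 0 ≤ z.re ∧ z.im = 0 := by
  rw [Complex.le_def]; aesop

lemma real_smul_mat (r : ℝ) (A : Mat) : r • A = (r:ℂ) • A := by
  ext i j; simp [Complex.real_smul]

lemma trace_eq_sum_eigenvalues {A : Mat} (hA : A.IsHermitian) :
    A.trace = ∑ i, (hA.eigenvalues i : ℂ) := by
  conv_lhs => rw [hA.spectral_theorem, Unitary.conjStarAlgAut_apply]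
  rw [trace_mul_cycle]
  have hU : (star (hA.eigenvectorUnitary : Mat)) * (hA.eigenvectorUnitary : Mat) = 1 :=
    Unitary.coe_star_mul_self _
  rw [hU, one_mul, trace_diagonal]
  rfl

/-- trace of a PSD matrix is a nonneg real. -/
lemma psd_trace_nonneg {A : Mat} (hA : A.PosSemidef) : 0 ≤ A.trace := by
  refine Finset.sum_nonneg fun i _ => ?_
  have := hA.dotProduct_mulVec_nonneg (Pi.single i 1)
  simpa [dotProduct, mulVec, Pi.single_apply] using this

/-- `Tr(AB) ≥ 0` for PSD `A`, `B`. -/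
lemma psd_trace_mul_nonneg {A B : Mat} (hA : A.PosSemidef) (hB : B.PosSemidef) :
    0 ≤ (A * B).trace := by
  obtain ⟨C, rfl⟩ := psd_exists_conjTranspose_mul_self hB
  have h1 : (A * (Cᴴ * C)).trace = (C * A * Cᴴ).trace := by
    rw [mul_assoc, trace_mul_comm, mul_assoc, trace_mul_comm, ← mul_assoc]
  rw [h1]
  exact psd_trace_nonneg (hA.mul_mul_conjTranspose_same C)

/-- Tr(AB) is real for Hermitian A, B. -/
lemma herm_trace_mul_real {A B : Mat} (hA : A.IsHermitian) (hB : B.IsHermitian) :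
    ((A * B).trace).im = 0 := by
  have : star ((A * B).trace) = (A * B).trace := by
    rw [← trace_conjTranspose, conjTranspose_mul, hA.eq, hB.eq, trace_mul_comm]
  rwa [Complex.star_def, Complex.conj_eq_iff_im] at this

lemma psd_trace_mul_re_nonneg {A B : Mat} (hA : A.PosSemidef) (hB : B.PosSemidef) :
    0 ≤ ((A * B).trace).re :=
  (zero_le_complex.mp (psd_trace_mul_nonneg hA hB)).1

/-- `Tr(XᴴX) = Σ |X i j|²`. -/
lemma trace_conjTranspose_mul_self (X : Mat) :
    (Xᴴ * X).trace = ∑ j, ∑ i, (Complex.normSq (X i j) : ℂ) := by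
  simp only [trace, diag, mul_apply, conjTranspose_apply]
  congr 1; ext j; congr 1; ext i
  rw [Complex.star_def, Complex.normSq_eq_conj_mul_self]

lemma eq_zero_of_conjTranspose_mul_self_trace {X : Mat}
    (h : ((Xᴴ * X).trace) = 0) : X = 0 := by
  rw [trace_conjTranspose_mul_self] at h
  have h2 : ∑ j, ∑ i, Complex.normSq (X i j) = 0 := by
    have := congrArg Complex.re h
    simpa using this
  ext i j
  have hnn : ∀ j ∈ Finset.univ, (0:ℝ) ≤ ∑ i, Complex.normSq (X i j) := fun j _ =>
    Finset.sum_nonneg fun i _ => Complex.normSq_nonneg _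
  have := (Finset.sum_eq_zero_iff_of_nonneg hnn).mp h2 j (Finset.mem_univ j)
  have := (Finset.sum_eq_zero_iff_of_nonneg (fun i _ => Complex.normSq_nonneg _)).mp this i
    (Finset.mem_univ i)
  simpa using Complex.normSq_eq_zero.mp this

/-- A PSD matrix with zero trace is zero. -/
lemma psd_trace_zero {A : Mat} (hA : A.PosSemidef) (h : A.trace = 0) : A = 0 := by
  obtain ⟨C, rfl⟩ := psd_exists_conjTranspose_mul_self hA
  rw [eq_zero_of_conjTranspose_mul_self_trace h, conjTranspose_zero, mul_zero]

end Stmt18Aux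

namespace Stmt18Aux2
open Stmt18Aux
variable {n : ℕ}
local notation "Mat" => Matrix (Fin n) (Fin n) ℂ

lemma psd_smul {r : ℝ} {A : Mat} (hr : 0 ≤ r) (hA : A.PosSemidef) :
    (r • A).PosSemidef := by
  rw [real_smul_mat]
  refine PosSemidef.of_dotProduct_mulVec_nonneg ?_ ?_
  · unfold Matrix.IsHermitian
    rw [conjTranspose_smul, hA.1.eq]
    congr 1
    simp [Complex.ext_iff, hr]
  · intro x
    rw [smul_mulVec, dotProduct_smul]
    exact smul_nonneg (Complex.zero_le_real.mpr hr) (hA.dotProduct_mulVec_nonneg x)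

/-- PSD with PSD difference transfers: if `A` PSD and `B - A` PSD then `B` PSD. -/
lemma psd_of_sub {A B : Mat} (hA : A.PosSemidef) (h : (B - A).PosSemidef) : B.PosSemidef := by
  have := h.add hA
  simpa using this

/-- spectral bound above: any Hermitian is below a multiple of 1. -/
lemma herm_le_smul_one {A : Mat} (hA : A.IsHermitian) :
    ∃ c : ℝ, 0 ≤ c ∧ ((c • (1:Mat)) - A).PosSemidef := by
  classical
  refine ⟨∑ i, |hA.eigenvalues i|, Finset.sum_nonneg fun i _ => abs_nonneg _, ?_⟩
  set c : ℝ := ∑ i, |hA.eigenvalues i| with hc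
  have hci : ∀ i, hA.eigenvalues i ≤ c := by
    intro i
    calc hA.eigenvalues i ≤ |hA.eigenvalues i| := le_abs_self _
    _ ≤ c := Finset.single_le_sum (f := fun i => |hA.eigenvalues i|)
        (fun i _ => abs_nonneg _) (Finset.mem_univ i)
  set V : Mat := (hA.eigenvectorUnitary : Mat) with hV
  have hVV : V * star V = 1 := Unitary.coe_mul_star_self _
  have key : (c • (1:Mat)) - A
      = V * diagonal (fun i => ((c - hA.eigenvalues i : ℝ) : ℂ)) * Vᴴ := by
    conv_lhs => rw [hA.spectral_theorem, Unitary.conjStarAlgAut_apply]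
    have h1 : (c • (1:Mat)) = V * (c • (1:Mat)) * star V := by
      rw [mul_smul_comm, smul_mul_assoc, mul_one, hVV]
    rw [h1, ← Matrix.star_eq_conjTranspose]
    rw [← sub_mul, ← mul_sub]
    congr 2
    rw [real_smul_mat, smul_eq_diagonal_mul, mul_one]
    rw [diagonal_sub]
    congr 1; ext i; simp
  rw [key]
  have hd : (diagonal (fun i => ((c - hA.eigenvalues i : ℝ) : ℂ))).PosSemidef :=
    PosSemidef.diagonal fun i => Complex.zero_le_real.mpr (by linarith [hci i])
  exact hd.mul_mul_conjTranspose_same V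

/-- spectral bound below for PosDef: `b ⪰ ε•1` for some `ε>0`, provided `n ≠ 0`. -/
lemma posdef_ge_smul_one [NeZero n] {b : Mat} (hb : b.PosDef) :
    ∃ ε : ℝ, 0 < ε ∧ (b - ε • (1:Mat)).PosSemidef := by
  classical
  have hH := hb.1
  obtain ⟨i0⟩ : Nonempty (Fin n) := Fin.pos_iff_nonempty.mp (Nat.pos_of_ne_zero (NeZero.ne n))
  refine ⟨Finset.univ.inf' ⟨i0, Finset.mem_univ i0⟩ hH.eigenvalues, ?_, ?_⟩
  · obtain ⟨j, _, hj⟩ := Finset.exists_mem_eq_inf' ⟨i0, Finset.mem_univ i0⟩ hH.eigenvalues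
    rw [hj]; exact hb.eigenvalues_pos j
  · set ε : ℝ := Finset.univ.inf' ⟨i0, Finset.mem_univ i0⟩ hH.eigenvalues with he
    set V : Mat := (hH.eigenvectorUnitary : Mat) with hV
    have hVV : V * star V = 1 := Unitary.coe_mul_star_self _
    have key : b - (ε • (1:Mat))
        = V * diagonal (fun i => ((hH.eigenvalues i - ε : ℝ) : ℂ)) * Vᴴ := by
      conv_lhs => rw [hH.spectral_theorem, Unitary.conjStarAlgAut_apply]
      have h1 : (ε • (1:Mat)) = V * (ε • (1:Mat)) * star V := by
        rw [mul_smul_comm, smul_mul_assoc, mul_one, hVV]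
      rw [h1, ← Matrix.star_eq_conjTranspose, ← sub_mul, ← mul_sub]
      congr 2
      rw [real_smul_mat, smul_eq_diagonal_mul, mul_one, diagonal_sub]
      congr 1; ext i; simp
    rw [key]
    have hd : (diagonal (fun i => ((hH.eigenvalues i - ε : ℝ) : ℂ))).PosSemidef :=
      PosSemidef.diagonal fun i => Complex.zero_le_real.mpr
        (by linarith [Finset.inf'_le hH.eigenvalues (Finset.mem_univ i)])
    exact hd.mul_mul_conjTranspose_same V

end Stmt18Aux2

namespace Stmt18Aux3
open Stmt18Aux Stmt18Aux2
variable {n : ℕ}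
local notation "Mat" => Matrix (Fin n) (Fin n) ℂ

lemma psd_sum {ι : Type*} (s : Finset ι) (f : ι → Mat) (h : ∀ i ∈ s, (f i).PosSemidef) :
    (∑ i ∈ s, f i).PosSemidef := by
  classical
  induction s using Finset.induction with
  | empty => simpa using Matrix.PosSemidef.zero
  | insert _ _ hx ih =>
    rename_i a s
    rw [Finset.sum_insert hx]
    exact (h a (Finset.mem_insert_self a s)).add (ih fun i hi => h i (Finset.mem_insert_of_mem hi))

lemma exists_smul_posdef_sub_psd [NeZero n] {b A : Mat} (hb : b.PosDef) (hA : A.IsHermitian) :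
    ∃ R : ℝ, 0 < R ∧ ((R • b) - A).PosSemidef := by
  obtain ⟨c, hc0, hc⟩ := herm_le_smul_one hA
  obtain ⟨ε, hε0, hε⟩ := posdef_ge_smul_one hb
  refine ⟨(c + 1) / ε, by positivity, ?_⟩
  have key : ((c+1)/ε) • b - A
      = ((c+1)/ε) • (b - ε • (1:Mat)) + (1:ℝ) • (1:Mat) + ((c • (1:Mat)) - A) := by
    rw [smul_sub, smul_smul]
    rw [div_mul_cancel₀ _ (ne_of_gt hε0)]
    module
  rw [key]
  exact ((psd_smul (by positivity) hε).add (psd_smul zero_le_one Matrix.PosSemidef.one)).add hc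

lemma posdef_trace_comparison [NeZero n] {b : Mat} (hb : b.PosDef) :
    ∃ ε : ℝ, 0 < ε ∧ ∀ M : Mat, M.PosSemidef → ε * (M.trace).re ≤ ((b * M).trace).re := by
  obtain ⟨ε, hε0, hε⟩ := posdef_ge_smul_one hb
  refine ⟨ε, hε0, fun M hM => ?_⟩
  have h1 : 0 ≤ (((b - ε • (1:Mat)) * M).trace).re := psd_trace_mul_re_nonneg hε hM
  have h2 : ((b - ε • (1:Mat)) * M).trace = (b * M).trace - (ε:ℂ) * M.trace := by
    rw [sub_mul, trace_sub, real_smul_mat, smul_mul_assoc, one_mul, trace_smul, smul_eq_mul]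
  rw [h2] at h1
  simp only [Complex.sub_re, Complex.mul_re, Complex.ofReal_re, Complex.ofReal_im] at h1
  linarith

lemma psd_eq_zero_of_trace_mul [NeZero n] {b M : Mat} (hb : b.PosDef) (hM : M.PosSemidef)
    (h : ((b * M).trace).re = 0) : M = 0 := by
  obtain ⟨ε, hε0, hε⟩ := posdef_trace_comparison hb
  have h1 := hε M hM
  rw [h] at h1
  have h2 : (M.trace).re ≤ 0 := nonpos_of_mul_nonpos_right (by linarith) hε0
  have h3 := zero_le_complex.mp (psd_trace_nonneg hM)
  apply psd_trace_zero hM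
  rw [Complex.ext_iff]
  constructor
  · simp; linarith [h3.1]
  · simpa using h3.2

end Stmt18Aux3

namespace Stmt18Aux4
variable {n : ℕ}
local notation "Mat" => Matrix (Fin n) (Fin n) ℂ

noncomputable def Tmap (n : ℕ) : Matrix (Fin n) (Fin n) ℂ ≃ₗ[ℝ] EuclideanSpace ℝ (Fin n × Fin n × Bool) where
  toFun M := WithLp.toLp 2 fun (p : Fin n × Fin n × Bool) => if p.2.2 then (M p.1 p.2.1).im else (M p.1 p.2.1).re
  invFun v := fun i j => ⟨v (i,j,false), v (i,j,true)⟩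
  map_add' A B := by ext p; by_cases h : p.2.2 <;> simp [h]
  map_smul' r A := by ext p; by_cases h : p.2.2 <;> simp [h, Complex.smul_re, Complex.smul_im]
  left_inv A := by ext i j <;> simp
  right_inv v := by ext p; obtain ⟨i, j, (_|_)⟩ := p <;> simp

lemma inner_Tmap (X Y : Mat) :
    (inner ℝ (Tmap n X) (Tmap n Y) : ℝ) = ((Xᴴ * Y).trace).re := by
  rw [PiLp.inner_apply]
  simp only [RCLike.inner_apply, starRingEnd_apply, star_trivial]
  rw [Fintype.sum_prod_type]
  have : ∀ i : Fin n, ∀ j : Fin n,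
      (∑ b : Bool, (Tmap n Y) (i, j, b) * (Tmap n X) (i, j, b))
        = ((starRingEnd ℂ) (X i j) * Y i j).re := by
    intro i j
    change (∑ b : Bool, (if b then (Y i j).im else (Y i j).re) *
      (if b then (X i j).im else (X i j).re)) = _
    simp [Tmap, Fintype.sum_bool, Complex.mul_re]
    ring
  simp only [Fintype.sum_prod_type] at *
  rw [trace, Complex.re_sum]
  rw [Finset.sum_comm]
  refine Finset.sum_congr rfl fun i _ => ?_
  rw [diag, mul_apply, Complex.re_sum]
  refine Finset.sum_congr rfl fun j _ => ?_
  rw [this j i]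
  simp [conjTranspose_apply, Complex.star_def]

end Stmt18Aux4

namespace Aux5
variable {n : ℕ}
local notation "Mat" => Matrix (Fin n) (Fin n) ℂ
open Stmt18Aux4

lemma trace_sq_eq {M : Mat} (hM : M.IsHermitian) :
    ((M * M).trace) = ∑ i, ((hM.eigenvalues i)^2 : ℂ) := by
  set V : Mat := (hM.eigenvectorUnitary : Mat) with hV
  have hVV : star V * V = 1 := Unitary.coe_star_mul_self _
  have key : M * M = V * diagonal (fun i => ((hM.eigenvalues i)^2 : ℂ)) * star V := by
    conv_lhs => rw [hM.spectral_theorem, Unitary.conjStarAlgAut_apply]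
    have h1 : ∀ X : Mat, star V * (V * X) = X := fun X => by rw [← mul_assoc, hVV, one_mul]
    simp only [mul_assoc]
    rw [h1]
    congr 1
    rw [← mul_assoc, diagonal_mul_diagonal]
    congr 1
    ext i; simp [pow_two]
  rw [key, trace_mul_cycle, hVV, one_mul, trace_diagonal]

lemma norm_Tmap_le_trace {M : Mat} (hM : M.PosSemidef) :
    ‖Tmap n M‖ ≤ (M.trace).re := by
  have h0 : 0 ≤ (M.trace).re := by
    have := Stmt18Aux.psd_trace_nonneg hM
    rw [Stmt18Aux.zero_le_complex] at this; exact this.1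
  rw [← Real.sqrt_sq h0, norm_eq_sqrt_real_inner]
  apply Real.sqrt_le_sqrt
  rw [inner_Tmap, hM.1.eq]
  have h1 : ((M * M).trace).re = ∑ i, (hM.1.eigenvalues i)^2 := by
    rw [trace_sq_eq hM.1, Complex.re_sum]
    refine Finset.sum_congr rfl fun i _ => ?_
    rw [← Complex.ofReal_pow, Complex.ofReal_re]
  have h2 : (M.trace).re = ∑ i, hM.1.eigenvalues i := by
    rw [Stmt18Aux.trace_eq_sum_eigenvalues hM.1, Complex.re_sum]
    exact Finset.sum_congr rfl fun i _ => Complex.ofReal_re _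
  rw [h1, h2]
  exact Finset.sum_sq_le_sq_sum_of_nonneg fun i _ => hM.eigenvalues_nonneg i

end Aux5

namespace Aux6
open Stmt18Aux Stmt18Aux2 Stmt18Aux3 Stmt18Aux4 Aux5
variable {n : ℕ}
local notation "Mat" => Matrix (Fin n) (Fin n) ℂ

lemma vecMulVec_star_psd (v : Fin n → ℂ) : (vecMulVec v (star v)).PosSemidef := by
  have : vecMulVec v (star v) = replicateCol (Fin 1) v * (replicateCol (Fin 1) v)ᴴ := by
    ext i j
    simp [vecMulVec_apply, mul_apply, conjTranspose_apply, replicateCol]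
  rw [this]
  exact posSemidef_self_mul_conjTranspose _

lemma trace_mul_vecMulVec (G : Mat) (v : Fin n → ℂ) :
    (G * vecMulVec v (star v)).trace = star v ⬝ᵥ (G *ᵥ v) := by
  simp only [trace, diag, mul_apply, vecMulVec_apply, dotProduct, mulVec, Pi.star_apply]
  refine Finset.sum_congr rfl fun i _ => ?_
  rw [Finset.mul_sum]
  refine Finset.sum_congr rfl fun j _ => by ring

lemma herm_dotProduct_im {A : Mat} (hA : A.IsHermitian) (v : Fin n → ℂ) :
    (star v ⬝ᵥ (A *ᵥ v)).im = 0 := by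
  have hA' : ∀ i j, (starRingEnd ℂ) (A j i) = A i j := fun i j => by
    have := congrFun (congrFun hA.eq i) j
    rwa [conjTranspose_apply, Complex.star_def] at this
  have h : (starRingEnd ℂ) (star v ⬝ᵥ (A *ᵥ v)) = star v ⬝ᵥ (A *ᵥ v) := by
    simp only [dotProduct, mulVec, Pi.star_apply, Finset.mul_sum, map_sum, _root_.map_mul,
      Complex.star_def, Complex.conj_conj]
    rw [Finset.sum_comm]
    refine Finset.sum_congr rfl fun i _ => Finset.sum_congr rfl fun j _ => ?_
    rw [hA' i j]
    ring
  rwa [Complex.conj_eq_iff_im] at h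

/-- real smul preserves hermitian. -/
lemma herm_real_smul {A : Mat} (r : ℝ) (hA : A.IsHermitian) : (r • A).IsHermitian := by
  rw [real_smul_mat]
  unfold Matrix.IsHermitian
  rw [conjTranspose_smul, hA.eq]
  congr 1
  simp [Complex.ext_iff]

lemma span_herm {B : Set Mat} (hB : ∀ b ∈ B, Matrix.IsHermitian b) {x : Mat}
    (hx : x ∈ Submodule.span ℝ B) : x.IsHermitian := by
  induction hx using Submodule.span_induction with
  | mem b hb => exact hB b hb
  | zero => exact isHermitian_zero
  | add x y _ _ hx hy => exact hx.add hy
  | smul r x _ hx => exact herm_real_smul r hx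

end Aux6

namespace Aux7
open Stmt18Aux Stmt18Aux2 Stmt18Aux3 Stmt18Aux4 Aux5 Aux6
variable {n : ℕ}
local notation "Mat" => Matrix (Fin n) (Fin n) ℂ
local notation "Esp" => EuclideanSpace ℝ (Fin n × Fin n × Bool)

lemma expDmax_le {a b : Mat} {r : ℝ} (hr : 0 < r) (h : ((r • b - a) : Mat).PosSemidef) :
    expDmax a b ≤ ENNReal.ofReal r :=
  iInf_le_of_le r (iInf_le_of_le hr (iInf_le_of_le h le_rfl))

lemma expDmax_lt_dest {a b : Mat} {x : ENNReal} (h : expDmax a b < x) :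
    ∃ r : ℝ, 0 < r ∧ ((r • b - a) : Mat).PosSemidef ∧ ENNReal.ofReal r < x := by
  simp only [expDmax, iInf_lt_iff] at h
  obtain ⟨r, hr, hpsd, hlt⟩ := h
  exact ⟨r, hr, hpsd, hlt⟩

noncomputable def trRe (C : Mat) : Mat →ₗ[ℝ] ℝ where
  toFun X := ((X * C).trace).re
  map_add' X Y := by simp [add_mul]
  map_smul' r X := by
    rw [real_smul_mat, smul_mul_assoc, trace_smul, smul_eq_mul]
    simp [Complex.mul_re]

lemma trRe_apply (C X : Mat) : trRe C X = ((X * C).trace).re := rfl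

noncomputable def sumMap (D : Type*) [Fintype D] : (D → Mat) →ₗ[ℝ] Mat where
  toFun M := ∑ d, M d
  map_add' M N := by simp [Finset.sum_add_distrib]
  map_smul' r M := by simp [Finset.smul_sum]

noncomputable def payL {D : Type*} [Fintype D] (a : D → Mat) : (D → Mat) →ₗ[ℝ] ℝ where
  toFun M := ∑ d, trRe (a d) (M d)
  map_add' M N := by simp [Finset.sum_add_distrib]
  map_smul' r M := by simp [Finset.mul_sum]

lemma Tmap_symm_apply (z : Esp) (i j : Fin n) :
    ((Tmap n).symm z) i j = ⟨z (i,j,false), z (i,j,true)⟩ := rfl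

noncomputable def coordL (p : Fin n × Fin n × Bool) : Esp →ₗ[ℝ] ℝ where
  toFun z := z p
  map_add' x y := rfl
  map_smul' r x := rfl

noncomputable def qre (v : Fin n → ℂ) : Esp →ₗ[ℝ] ℝ where
  toFun z := (star v ⬝ᵥ (((Tmap n).symm z) *ᵥ v)).re
  map_add' x y := by
    rw [map_add, add_mulVec, dotProduct_add]
    simp
  map_smul' r x := by
    rw [_root_.map_smul, real_smul_mat, smul_mulVec, dotProduct_smul, smul_eq_mul]
    simp [Complex.mul_re]

lemma isClosed_psd : IsClosed {z : Esp | (((Tmap n).symm z) : Mat).PosSemidef} := by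
  have hEq : {z : Esp | (((Tmap n).symm z) : Mat).PosSemidef} =
      ((⋂ (p : Fin n × Fin n), ({z : Esp | coordL (p.2, p.1, false) z = coordL (p.1, p.2, false) z}
          ∩ {z : Esp | coordL (p.2, p.1, true) z + coordL (p.1, p.2, true) z = 0}))
        ∩ ⋂ (v : Fin n → ℂ), {z : Esp | 0 ≤ qre v z}) := by
    have hcoord : ∀ (z : Esp) (p : Fin n × Fin n × Bool), coordL p z = z p := fun _ _ => rfl
    ext z
    constructor
    · rintro ⟨hH, hq⟩
      refine ⟨Set.mem_iInter.mpr fun p => ?_, Set.mem_iInter.mpr fun v => ?_⟩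
      · have := congrFun (congrFun hH.eq p.1) p.2
        rw [conjTranspose_apply, Tmap_symm_apply, Tmap_symm_apply, Complex.star_def,
          Complex.ext_iff] at this
        obtain ⟨h1, h2⟩ := this
        simp only [Complex.neg_im] at *
        constructor
        · simpa [hcoord] using h1
        · simp only [Set.mem_setOf_eq, hcoord]
          simp at h2
          linarith
      · exact (zero_le_complex.mp (PosSemidef.dotProduct_mulVec_nonneg ⟨hH, hq⟩ v)).1
    · rintro ⟨hH, hq⟩
      have hHerm : (((Tmap n).symm z) : Mat).IsHermitian := by
        ext i j
        obtain ⟨h1, h2⟩ := Set.mem_iInter.mp hH (i, j)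
        rw [conjTranspose_apply, Tmap_symm_apply, Tmap_symm_apply, Complex.star_def]
        rw [Complex.ext_iff]
        simp only [Set.mem_setOf_eq, hcoord] at h1 h2
        constructor
        · simpa using h1
        · simp
          linarith
      refine PosSemidef.of_dotProduct_mulVec_nonneg hHerm fun v => ?_
      rw [zero_le_complex]
      exact ⟨Set.mem_iInter.mp hq v, herm_dotProduct_im hHerm v⟩
  rw [hEq]
  refine IsClosed.inter (isClosed_iInter fun p => IsClosed.inter ?_ ?_)
      (isClosed_iInter fun v => ?_)
  · exact isClosed_eq (coordL _).continuous_of_finiteDimensional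
      (coordL _).continuous_of_finiteDimensional
  · exact isClosed_eq ((coordL _).continuous_of_finiteDimensional.add
      (coordL _).continuous_of_finiteDimensional) continuous_const
  · exact isClosed_le continuous_const (qre v).continuous_of_finiteDimensional

noncomputable def sumE (D : Type*) [Fintype D] : (D → Esp) →ₗ[ℝ] Esp where
  toFun z := ∑ d, z d
  map_add' z z' := by simp [Finset.sum_add_distrib]
  map_smul' r z := by simp [Finset.smul_sum]

noncomputable def pullT (D : Type*) [Fintype D] : (D → Esp) →ₗ[ℝ] (D → Mat) where
  toFun z := fun d => (Tmap n).symm (z d)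
  map_add' z z' := by funext d; simp
  map_smul' r z := by funext d; simp

lemma trace_pair_le {M A b : Mat} (hM : M.PosSemidef) {r : ℝ}
    (h : ((r • b - A : Mat)).PosSemidef) :
    ((M * A).trace).re ≤ r * ((M * b).trace).re := by
  have h0 := psd_trace_mul_re_nonneg hM h
  have hexp : (M * (r • b - A)).trace = (r:ℂ) * (M * b).trace - (M * A).trace := by
    rw [mul_sub, trace_sub, real_smul_mat, mul_smul_comm, trace_smul, smul_eq_mul]
  rw [hexp] at h0
  simp only [Complex.sub_re, Complex.mul_re, Complex.ofReal_re, Complex.ofReal_im,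
    zero_mul, sub_zero] at h0
  linarith

end Aux7

set_option maxHeartbeats 2000000 in
open Stmt18Aux Stmt18Aux2 Stmt18Aux3 Stmt18Aux4 Aux5 Aux6 Aux7 in
/-- The maximal average payoff over all `B`-POVMs equals
`inf_{b ∈ B} sup_{d ∈ D} 2^{D_max(Σ_θ λ_θ w(θ,d) b_θ ‖ b)}`. -/
theorem stmt18 {Θ D : Type*} [Fintype Θ] [Fintype D]
    (B : Set (Matrix (Fin n) (Fin n) ℂ)) (hB : IsFaithfulSection B)
    (bfam : Θ → Matrix (Fin n) (Fin n) ℂ) (hbfam : ∀ θ, bfam θ ∈ B)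
    (lam : Θ → ℝ) (hlam0 : ∀ θ, 0 ≤ lam θ) (hlam1 : ∑ θ, lam θ = 1)
    (w : Θ → D → ℝ) (hw0 : ∀ θ d, 0 ≤ w θ d) (hw1 : ∀ θ d, w θ d ≤ 1) :
    ENNReal.ofReal
        (sSup {r | ∃ M : D → Matrix (Fin n) (Fin n) ℂ,
          (∀ d, (M d).PosSemidef) ∧ (∑ d, M d) ∈ dualSection B ∧
          r = ∑ θ, ∑ d, lam θ * w θ d * ((M d * bfam θ).trace).re}) =
      ⨅ b ∈ B, ⨆ d : D, expDmax (∑ θ, (lam θ * w θ d) • bfam θ) b := by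
  classical
  obtain ⟨⟨L, bs, hbs, hBeq⟩, b0, hb0B, hb0⟩ := hB
  have hBmem : ∀ b : Matrix (Fin n) (Fin n) ℂ,
      b ∈ B ↔ b ∈ L ∧ (b.PosSemidef ∧ (b * bs).trace = 1) := fun b => by rw [hBeq]; rfl
  have hb0tr : (b0 * bs).trace = 1 := ((hBmem b0).mp hb0B).2.2
  -- the dimension is positive
  rcases Nat.eq_zero_or_pos n with hn | hn
  · exfalso
    subst hn
    rw [show ((b0 * bs).trace) = 0 from by simp [Matrix.trace]] at hb0tr
    exact one_ne_zero hb0tr.symm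
  haveI : NeZero n := ⟨hn.ne'⟩
  have hBpsd : ∀ b ∈ B, Matrix.PosSemidef b := fun b hb => ((hBmem b).mp hb).2.1
  have hBtr : ∀ b ∈ B, (b * bs).trace = 1 := fun b hb => ((hBmem b).mp hb).2.2
  have hBsubL : ∀ b ∈ B, b ∈ L := fun b hb => ((hBmem b).mp hb).1
  have hbs_dual : bs ∈ dualSection B := ⟨hbs.posSemidef, fun b hb => hBtr b hb⟩
  set a : D → Matrix (Fin n) (Fin n) ℂ := fun d => ∑ θ, (lam θ * w θ d) • bfam θ with ha
  have hard : ∀ d, (∑ θ, (lam θ * w θ d) • bfam θ) = a d := fun d => rfl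
  simp only [hard]
  have ha_psd : ∀ d, (a d).PosSemidef := fun d =>
    psd_sum _ _ fun θ _ => psd_smul (mul_nonneg (hlam0 θ) (hw0 θ d)) (hBpsd _ (hbfam θ))
  -- rewriting payoffs
  have hpayd : ∀ (X : Matrix (Fin n) (Fin n) ℂ) d,
      ((X * a d).trace).re = ∑ θ, lam θ * w θ d * ((X * bfam θ).trace).re := by
    intro X d
    rw [← hard d, Finset.mul_sum, trace_sum, Complex.re_sum]
    refine Finset.sum_congr rfl fun θ _ => ?_
    rw [mul_smul_comm, trace_smul, Complex.real_smul, Complex.mul_re]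
    simp only [Complex.ofReal_re, Complex.ofReal_im, zero_mul, sub_zero]
  have hpay : ∀ M : D → Matrix (Fin n) (Fin n) ℂ,
      (∑ θ, ∑ d, lam θ * w θ d * ((M d * bfam θ).trace).re) = payL a M := by
    intro M
    rw [Finset.sum_comm]
    exact Finset.sum_congr rfl fun d _ => (hpayd (M d) d).symm
  set PS : Set ℝ := {r | ∃ M : D → Matrix (Fin n) (Fin n) ℂ,
          (∀ d, (M d).PosSemidef) ∧ (∑ d, M d) ∈ dualSection B ∧
          r = ∑ θ, ∑ d, lam θ * w θ d * ((M d * bfam θ).trace).re} with hPS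
  have hPSchar : ∀ r, r ∈ PS ↔ ∃ M : D → Matrix (Fin n) (Fin n) ℂ,
      (∀ d, (M d).PosSemidef) ∧ (∑ d, M d) ∈ dualSection B ∧ r = payL a M := by
    intro r
    constructor
    · rintro ⟨M, h1, h2, h3⟩; exact ⟨M, h1, h2, by rw [h3, hpay]⟩
    · rintro ⟨M, h1, h2, h3⟩; exact ⟨M, h1, h2, by rw [h3, hpay]⟩
  -- empty decision case
  cases isEmpty_or_nonempty D with
  | inl hD =>
    have hPSempty : PS = ∅ := by
      rw [Set.eq_empty_iff_forall_notMem]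
      rintro r ⟨M, _, hdual, _⟩
      have := hdual.2 b0 hb0B
      rw [show (∑ d, M d) = 0 from by simp, mul_zero, trace_zero] at this
      exact one_ne_zero this.symm
    rw [hPSempty, Real.sSup_empty, ENNReal.ofReal_zero]
    refine le_antisymm (zero_le) (le_trans (iInf₂_le b0 hb0B) (le_of_eq ?_))
    rw [iSup_of_empty]
    rfl
  | inr hD =>
    obtain ⟨d0⟩ := hD
    -- sum of traces against an element of the dual section
    have hsumtr : ∀ (M : D → Matrix (Fin n) (Fin n) ℂ) (b : Matrix (Fin n) (Fin n) ℂ),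
        b ∈ B → (∑ d, M d) ∈ dualSection B → ∑ d, ((M d * b).trace).re = 1 := by
      intro M b hb hdual
      have h1 : (∑ d, (M d * b)) = (∑ d, M d) * b := by rw [Finset.sum_mul]
      have h2 : ((∑ d, M d) * b).trace = 1 := by
        rw [trace_mul_comm]; exact hdual.2 b hb
      rw [← Complex.re_sum, ← trace_sum, h1, h2, Complex.one_re]
    have hpaynn : ∀ M : D → Matrix (Fin n) (Fin n) ℂ, (∀ d, (M d).PosSemidef) →
        0 ≤ payL a M :=
      fun M hM => Finset.sum_nonneg fun d _ => psd_trace_mul_re_nonneg (hM d) (ha_psd d)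
    -- a-priori bound on payoffs
    obtain ⟨R, hR0, hRpsd⟩ :=
      exists_smul_posdef_sub_psd hb0 (psd_sum Finset.univ a fun d _ => ha_psd d).1
    have hub : ∀ M : D → Matrix (Fin n) (Fin n) ℂ, (∀ d, (M d).PosSemidef) →
        (∑ d, M d) ∈ dualSection B → payL a M ≤ R := by
      intro M hM hdual
      have hsub : ∀ d : D, ((R • b0 - a d : Matrix (Fin n) (Fin n) ℂ)).PosSemidef := by
        intro d
        have h1 : (∑ d', a d') - a d = ∑ d' ∈ Finset.univ.erase d, a d' :=
          (Finset.sum_erase_eq_sub (Finset.mem_univ d)).symm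
        have h2 : ((∑ d', a d') - a d).PosSemidef := by
          rw [h1]; exact psd_sum _ _ fun d' _ => ha_psd d'
        have h3 : (R • b0 - a d : Matrix (Fin n) (Fin n) ℂ)
            = (R • b0 - ∑ d', a d') + ((∑ d', a d') - a d) := by module
        rw [h3]; exact hRpsd.add h2
      calc payL a M = ∑ d, ((M d * a d).trace).re := rfl
        _ ≤ ∑ d, R * ((M d * b0).trace).re :=
            Finset.sum_le_sum fun d _ => trace_pair_le (hM d) (hsub d)
        _ = R * ∑ d, ((M d * b0).trace).re := by rw [Finset.mul_sum]
        _ = R := by rw [hsumtr M b0 hb0B hdual, mul_one]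
    -- PS is nonempty and bounded above
    have hbdd : BddAbove PS := by
      refine ⟨R, fun r hr => ?_⟩
      obtain ⟨M, h1, h2, h3⟩ := (hPSchar r).mp hr
      rw [h3]; exact hub M h1 h2
    have hM0 : ∀ d : D, ((Pi.single d0 bs : D → Matrix (Fin n) (Fin n) ℂ) d).PosSemidef := by
      intro d
      rcases eq_or_ne d d0 with h | h
      · subst h; rw [Pi.single_eq_same]; exact hbs.posSemidef
      · rw [Pi.single_eq_of_ne h]; exact Matrix.PosSemidef.zero
    have hM0sum : (∑ d, (Pi.single d0 bs : D → Matrix (Fin n) (Fin n) ℂ) d) = bs :=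
      Finset.sum_pi_single' d0 bs Finset.univ |>.trans (by simp)
    have hmem0 : payL a (Pi.single d0 bs) ∈ PS := by
      refine (hPSchar _).mpr ⟨Pi.single d0 bs, hM0, ?_, rfl⟩
      rw [hM0sum]; exact hbs_dual
    have hSne : PS.Nonempty := ⟨_, hmem0⟩
    set s : ℝ := sSup PS with hs
    have hle_s : ∀ r ∈ PS, r ≤ s := fun r hr => le_csSup hbdd hr
    have hs0 : 0 ≤ s := le_trans (hpaynn _ hM0) (hle_s _ hmem0)
    refine le_antisymm ?_ ?_
    · -- weak duality
      refine le_iInf₂ fun b hb => ?_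
      by_cases hRtop : (⨆ d : D, expDmax (a d) b) = ⊤
      · exact le_trans le_top (le_of_eq hRtop.symm)
      have hkey : ∀ r ∈ PS, r ≤ (⨆ d : D, expDmax (a d) b).toReal := by
        intro r hr
        obtain ⟨M, hMpsd, hMdual, hreq⟩ := (hPSchar r).mp hr
        refine le_of_forall_pos_le_add fun η hη => ?_
        have hch : ∀ d : D, ∃ rd : ℝ, 0 < rd ∧ (((rd • b - a d) :
            Matrix (Fin n) (Fin n) ℂ).PosSemidef) ∧
            rd ≤ (⨆ d : D, expDmax (a d) b).toReal + η := by
          intro d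
          have h1 : expDmax (a d) b < (⨆ d : D, expDmax (a d) b) + ENNReal.ofReal η :=
            lt_of_le_of_lt (le_iSup (fun d => expDmax (a d) b) d)
              (ENNReal.lt_add_right hRtop (ENNReal.ofReal_pos.mpr hη).ne')
          obtain ⟨rd, h2, h3, h4⟩ := expDmax_lt_dest h1
          refine ⟨rd, h2, h3, ?_⟩
          have h5 : ENNReal.ofReal rd
              ≤ ENNReal.ofReal ((⨆ d : D, expDmax (a d) b).toReal + η) := by
            refine le_trans h4.le (le_of_eq ?_)
            rw [ENNReal.ofReal_add ENNReal.toReal_nonneg hη.le, ENNReal.ofReal_toReal hRtop]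
          rwa [ENNReal.ofReal_le_ofReal_iff (by positivity)] at h5
        choose rd hrd0 hrdpsd hrdle using hch
        have hb' : b.PosSemidef := hBpsd b hb
        rw [hreq]
        calc payL a M = ∑ d, ((M d * a d).trace).re := rfl
          _ ≤ ∑ d, rd d * ((M d * b).trace).re :=
              Finset.sum_le_sum fun d _ => trace_pair_le (hMpsd d) (hrdpsd d)
          _ ≤ ∑ d, ((⨆ d : D, expDmax (a d) b).toReal + η) * ((M d * b).trace).re :=
              Finset.sum_le_sum fun d _ => mul_le_mul_of_nonneg_right (hrdle d)
                (psd_trace_mul_re_nonneg (hMpsd d) hb')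
          _ = (⨆ d : D, expDmax (a d) b).toReal + η := by
              rw [← Finset.mul_sum, hsumtr M b hb hMdual, mul_one]
      have hsle : s ≤ (⨆ d : D, expDmax (a d) b).toReal := csSup_le hSne hkey
      calc ENNReal.ofReal s ≤ ENNReal.ofReal ((⨆ d : D, expDmax (a d) b).toReal) :=
            ENNReal.ofReal_le_ofReal hsle
        _ = ⨆ d : D, expDmax (a d) b := ENNReal.ofReal_toReal hRtop
    · -- strong duality
      refine ENNReal.le_of_forall_pos_le_add fun ε hε _ => ?_
      set δ : ℝ := (ε : ℝ) with hδdef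
      have hδ : 0 < δ := hε
      suffices hgood : ∃ b ∈ B, ∀ d : D, expDmax (a d) b ≤ ENNReal.ofReal (s + δ) by
        obtain ⟨b, hb, hbd⟩ := hgood
        refine le_trans (iInf₂_le b hb) (le_trans (iSup_le hbd) ?_)
        rw [ENNReal.ofReal_add hs0 hδ.le]
        rw [hδdef, ENNReal.ofReal_coe_nnreal]
      -- separation argument
      set T := Tmap n with hT
      set Ssp : Submodule ℝ (Matrix (Fin n) (Fin n) ℂ) := Submodule.span ℝ B with hSsp
      have hSspHerm : ∀ x ∈ Ssp, Matrix.IsHermitian x := fun x hx =>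
        span_herm (fun b hb => (hBpsd b hb).1) hx
      set S' : Submodule ℝ (EuclideanSpace ℝ (Fin n × Fin n × Bool)) :=
        Ssp.map T.toLinearMap with hS'
      set P := S'.orthogonalProjectionOnto with hP
      set pr : EuclideanSpace ℝ (Fin n × Fin n × Bool) →L[ℝ]
          EuclideanSpace ℝ (Fin n × Fin n × Bool) := S'.subtypeL.comp P with hpr
      have hπmem : ∀ z, pr z ∈ S' := fun z => (P z).2
      have hπfix : ∀ z ∈ S', pr z = z := fun z hz => Submodule.starProjection_eq_self_iff.mpr hz
      have hπsym : ∀ u v, (inner ℝ (pr u) v : ℝ) = inner ℝ u (pr v) := fun u v =>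
        Submodule.inner_starProjection_left_eq_right S' u v
      have hTB : ∀ b ∈ B, T b ∈ S' := fun b hb =>
        Submodule.mem_map_of_mem (Submodule.subset_span hb)
      have hinner : ∀ x : Matrix (Fin n) (Fin n) ℂ, x.IsHermitian →
          ∀ y : Matrix (Fin n) (Fin n) ℂ, (inner ℝ (T x) (T y) : ℝ) = ((x * y).trace).re := by
        intro x hx y
        rw [hT, inner_Tmap, hx.eq]
      -- the convex cone of achievable pairs
      set A : Set (EuclideanSpace ℝ (Fin n × Fin n × Bool) × ℝ) :=
        {q | ∃ M : D → Matrix (Fin n) (Fin n) ℂ, (∀ d, (M d).PosSemidef) ∧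
          q.1 = pr (T (∑ d, M d)) ∧ q.2 ≤ payL a M} with hA
      have hA0 : ((0 : EuclideanSpace ℝ (Fin n × Fin n × Bool)), (0:ℝ)) ∈ A := by
        refine ⟨0, fun d => Matrix.PosSemidef.zero, ?_, ?_⟩
        · simp
        · simp
      have hconv : Convex ℝ A := by
        rintro q ⟨M, hM, hq1, hq2⟩ q' ⟨M', hM', hq1', hq2'⟩ α β hα hβ hαβ
        refine ⟨fun d => α • M d + β • M' d,
          fun d => (psd_smul hα (hM d)).add (psd_smul hβ (hM' d)), ?_, ?_⟩
        · have hsum : (∑ d, (α • M d + β • M' d)) = α • (∑ d, M d) + β • (∑ d, M' d) := by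
            rw [Finset.sum_add_distrib, Finset.smul_sum, Finset.smul_sum]
          rw [Prod.fst_add, Prod.smul_fst, Prod.smul_fst, hq1, hq1', hsum, map_add,
            _root_.map_smul, _root_.map_smul, map_add, _root_.map_smul, _root_.map_smul]
        · have hpay' : payL a (fun d => α • M d + β • M' d)
              = α * payL a M + β * payL a M' := by
            have : (fun d => α • M d + β • M' d) = α • M + β • M' := by
              funext d; simp
            rw [this, map_add, _root_.map_smul, _root_.map_smul, smul_eq_mul, smul_eq_mul]
          rw [Prod.snd_add, Prod.smul_snd, Prod.smul_snd, hpay']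
          exact add_le_add (mul_le_mul_of_nonneg_left hq2 hα)
            (mul_le_mul_of_nonneg_left hq2' hβ)
      have hcone : ∀ q ∈ A, ∀ t : ℝ, 0 ≤ t → t • q ∈ A := by
        rintro q ⟨M, hM, hq1, hq2⟩ t ht
        refine ⟨fun d => t • M d, fun d => psd_smul ht (hM d), ?_, ?_⟩
        · have hsum : (∑ d, t • M d) = t • (∑ d, M d) := by rw [Finset.smul_sum]
          rw [Prod.smul_fst, hq1, hsum, _root_.map_smul, _root_.map_smul]
        · have : payL a (fun d => t • M d) = t * payL a M := by
            have : (fun d => t • M d) = t • M := by funext d; simp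
            rw [this, _root_.map_smul, smul_eq_mul]
          rw [Prod.smul_snd, this, smul_eq_mul]
          exact mul_le_mul_of_nonneg_left hq2 ht
      set p : (EuclideanSpace ℝ (Fin n × Fin n × Bool)) × ℝ := (pr (T bs), s + δ) with hp
      have hpA : p ∉ closure A := by
        intro hpcl
        obtain ⟨g, hgA, hglim⟩ := mem_closure_iff_seq_limit.mp hpcl
        have hMk : ∀ k, ∃ M : D → Matrix (Fin n) (Fin n) ℂ, (∀ d, (M d).PosSemidef) ∧
            (g k).1 = pr (T (∑ d, M d)) ∧ (g k).2 ≤ payL a M := fun k => hgA k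
        choose Mk hMkpsd hMkfst hMksnd using hMk
        have hfst : Filter.Tendsto (fun k => (g k).1) Filter.atTop (nhds p.1) :=
          (continuous_fst.tendsto p).comp hglim
        have hsnd : Filter.Tendsto (fun k => (g k).2) Filter.atTop (nhds p.2) :=
          (continuous_snd.tendsto p).comp hglim
        have hb0herm : b0.IsHermitian := hb0.posSemidef.1
        have hprfixb : ∀ (x : Matrix (Fin n) (Fin n) ℂ) (z),
            x ∈ Submodule.span ℝ B → (inner ℝ (T x) (pr z) : ℝ) = inner ℝ (T x) z := by
          intro x z hx
          have hmem : T x ∈ S' := Submodule.mem_map_of_mem hx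
          rw [← hπsym, hπfix _ hmem]
        have hφk : ∀ k, (inner ℝ (T b0) ((g k).1) : ℝ) = ((b0 * (∑ d, Mk k d)).trace).re := by
          intro k
          rw [hMkfst k, hprfixb b0 _ (Submodule.subset_span hb0B), hinner b0 hb0herm]
        have hφlim : Filter.Tendsto (fun k => (inner ℝ (T b0) ((g k).1) : ℝ)) Filter.atTop
            (nhds (inner ℝ (T b0) p.1 : ℝ)) :=
          ((continuous_const.inner continuous_id).tendsto p.1).comp hfst
        obtain ⟨C, hC⟩ := hφlim.bddAbove_range
        have hCk : ∀ k, ((b0 * (∑ d, Mk k d)).trace).re ≤ C := fun k => by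
          rw [← hφk k]; exact hC (Set.mem_range_self k)
        obtain ⟨ε₀, hε₀, hcomp⟩ := posdef_trace_comparison hb0
        have htrd : ∀ k d, ((Mk k d).trace).re ≤ C / ε₀ := by
          intro k d
          have h1 : ((b0 * Mk k d).trace).re ≤ C := by
            have hsplit2 : ((b0 * (∑ d, Mk k d)).trace).re
                = ∑ d', ((b0 * Mk k d').trace).re := by
              rw [Finset.mul_sum, trace_sum, Complex.re_sum]
            have h3 := Finset.single_le_sum (f := fun d' => ((b0 * Mk k d').trace).re)
              (fun d' _ => psd_trace_mul_re_nonneg hb0.posSemidef (hMkpsd k d'))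
              (Finset.mem_univ d)
            calc ((b0 * Mk k d).trace).re ≤ ∑ d', ((b0 * Mk k d').trace).re := h3
              _ = ((b0 * (∑ d, Mk k d)).trace).re := hsplit2.symm
              _ ≤ C := hCk k
          have h2 := hcomp (Mk k d) (hMkpsd k d)
          rw [le_div_iff₀ hε₀]
          calc ((Mk k d).trace).re * ε₀ = ε₀ * ((Mk k d).trace).re := by ring
            _ ≤ ((b0 * Mk k d).trace).re := h2
            _ ≤ C := h1
        have hynorm : ∀ k d, ‖T (Mk k d)‖ ≤ C / ε₀ := fun k d =>
          le_trans (norm_Tmap_le_trace (hMkpsd k d)) (htrd k d)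
        set y : ℕ → (D → EuclideanSpace ℝ (Fin n × Fin n × Bool)) :=
          fun k d => T (Mk k d) with hy
        have hCpos : 0 ≤ C / ε₀ := le_trans (norm_nonneg _) (hynorm 0 d0)
        have hball : ∀ k, y k ∈ Metric.closedBall
            (0 : D → EuclideanSpace ℝ (Fin n × Fin n × Bool)) (C/ε₀) := by
          intro k
          rw [Metric.mem_closedBall, dist_zero_right]
          exact (pi_norm_le_iff_of_nonneg hCpos).mpr fun d => hynorm k d
        obtain ⟨yh, _, κ, hκmono, hκlim⟩ := (isCompact_closedBall _ _).tendsto_subseq hball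
        set Mh : D → Matrix (Fin n) (Fin n) ℂ := fun d => T.symm (yh d) with hMh
        have hMhpsd : ∀ d, (Mh d).PosSemidef := by
          intro d
          have hcoordlim : Filter.Tendsto (fun k => y (κ k) d) Filter.atTop (nhds (yh d)) :=
            ((continuous_apply d).tendsto yh).comp hκlim
          have hmem : ∀ k, y (κ k) d ∈ {z | (((Tmap n).symm z)
              : Matrix (Fin n) (Fin n) ℂ).PosSemidef} := by
            intro k
            show (((Tmap n).symm (T (Mk (κ k) d))) : Matrix (Fin n) (Fin n) ℂ).PosSemidef
            rw [hT, LinearEquiv.symm_apply_apply]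
            exact hMkpsd (κ k) d
          exact (isClosed_psd (n := n)).mem_of_tendsto hcoordlim
            (Filter.Eventually.of_forall hmem)
        -- identify limits
        have hTsumMh : T (∑ d, Mh d) = sumE D yh := by
          rw [map_sum]
          refine Finset.sum_congr rfl fun d _ => ?_
          rw [hMh, hT, LinearEquiv.apply_symm_apply]
        have hκ1cont : Continuous fun z : D → EuclideanSpace ℝ (Fin n × Fin n × Bool) =>
            pr (sumE D z) :=
          pr.continuous.comp (sumE D).continuous_of_finiteDimensional
        have hκ1k : ∀ k, pr (sumE D (y k)) = (g k).1 := by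
          intro k
          rw [hMkfst k]
          congr 1
          rw [map_sum]
          exact Finset.sum_congr rfl fun d _ => rfl
        have hlim1 : pr (sumE D yh) = pr (T bs) := by
          have l1 : Filter.Tendsto (fun k => pr (sumE D (y (κ k)))) Filter.atTop
              (nhds (pr (sumE D yh))) := (hκ1cont.tendsto yh).comp hκlim
          have l2 : Filter.Tendsto (fun k => pr (sumE D (y (κ k)))) Filter.atTop
              (nhds p.1) := by
            have := hfst.comp hκmono.tendsto_atTop
            simpa only [Function.comp_def, hκ1k] using this
          exact tendsto_nhds_unique l1 l2
        -- payoff limit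
        have hκ2cont : Continuous fun z : D → EuclideanSpace ℝ (Fin n × Fin n × Bool) =>
            payL a (pullT D z) :=
          ((payL a).comp (pullT D)).continuous_of_finiteDimensional
        have hκ2k : ∀ k, payL a (pullT D (y k)) = payL a (Mk k) := by
          intro k
          have hyy : pullT D (y k) = Mk k := by
            funext d
            simp only [hy]
            show (Tmap n).symm ((Tmap n) (Mk k d)) = Mk k d
            rw [LinearEquiv.symm_apply_apply]
          rw [hyy]
        have hpayMh : s + δ ≤ payL a Mh := by
          have l1 : Filter.Tendsto (fun k => payL a (pullT D (y (κ k)))) Filter.atTop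
              (nhds (payL a (pullT D yh))) := (hκ2cont.tendsto yh).comp hκlim
          have l2 : Filter.Tendsto (fun k => (g (κ k)).2) Filter.atTop (nhds (s + δ)) := by
            have := hsnd.comp hκmono.tendsto_atTop
            exact this
          have l3 : ∀ k, (g (κ k)).2 ≤ payL a (pullT D (y (κ k))) := by
            intro k
            rw [hκ2k (κ k)]
            exact hMksnd (κ k)
          have l4 : payL a (pullT D yh) = payL a Mh := by
            have hyy : pullT D yh = Mh := by
              funext d
              show (Tmap n).symm (yh d) = Mh d
              rw [hMh, hT]
            rw [hyy]
          exact l4 ▸ le_of_tendsto_of_tendsto' l2 l1 l3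
        -- Mh is a POVM
        have hMhsum_psd : (∑ d, Mh d).PosSemidef := psd_sum _ _ fun d _ => hMhpsd d
        have hdual : (∑ d, Mh d) ∈ dualSection B := by
          refine ⟨hMhsum_psd, fun b hb => ?_⟩
          have hbherm : b.IsHermitian := (hBpsd b hb).1
          have hre : ((b * (∑ d, Mh d)).trace).re = 1 := by
            have e1 : ((b * (∑ d, Mh d)).trace).re = (inner ℝ (T b) (T (∑ d, Mh d)) : ℝ) :=
              (hinner b hbherm _).symm
            have e2 : (inner ℝ (T b) (T (∑ d, Mh d)) : ℝ) = inner ℝ (T b) (pr (T (∑ d, Mh d))) :=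
              (hprfixb b _ (Submodule.subset_span hb)).symm
            have e3 : pr (T (∑ d, Mh d)) = pr (T bs) := by rw [hTsumMh]; exact hlim1
            have e4 : (inner ℝ (T b) (pr (T bs)) : ℝ) = inner ℝ (T b) (T bs) :=
              hprfixb b _ (Submodule.subset_span hb)
            have e5 : (inner ℝ (T b) (T bs) : ℝ) = ((b * bs).trace).re := hinner b hbherm bs
            rw [e1, e2, e3, e4, e5, hBtr b hb, Complex.one_re]
          have him : ((b * (∑ d, Mh d)).trace).im = 0 :=
            herm_trace_mul_real hbherm hMhsum_psd.1
          rw [Complex.ext_iff]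
          exact ⟨by rw [hre, Complex.one_re], by rw [him, Complex.one_im]⟩
        have hmemPS : payL a Mh ∈ PS := (hPSchar _).mpr ⟨Mh, hMhpsd, hdual, rfl⟩
        have := hle_s _ hmemPS
        linarith
      obtain ⟨f, u, hfA, hfp⟩ :=
        geometric_hahn_banach_closed_point (hconv.closure) isClosed_closure hpA
      have hu0 : 0 < u := by
        have := hfA _ (subset_closure hA0)
        rwa [show ((0 : EuclideanSpace ℝ (Fin n × Fin n × Bool)), (0:ℝ))
          = (0 : (EuclideanSpace ℝ (Fin n × Fin n × Bool)) × ℝ) from rfl, map_zero] at this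
      have hfle : ∀ q ∈ A, f q ≤ 0 := by
        intro q hq
        by_contra hcontra
        push_neg at hcontra
        have ht : (0:ℝ) ≤ u / f q + 1 := by positivity
        have h1 := hfA _ (subset_closure (hcone q hq _ ht))
        rw [_root_.map_smul, smul_eq_mul] at h1
        rw [add_mul, div_mul_cancel₀ _ (ne_of_gt hcontra), one_mul] at h1
        linarith
      set g0 : EuclideanSpace ℝ (Fin n × Fin n × Bool) →L[ℝ] ℝ :=
        f.comp (ContinuousLinearMap.inl ℝ _ ℝ) with hg0
      set c : ℝ := f (0, 1) with hc
      have hsplit : ∀ z r, f (z, r) = g0 z + r * c := by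
        intro z r
        have h1 : (z, r) = ((z, 0) : (EuclideanSpace ℝ (Fin n × Fin n × Bool)) × ℝ)
            + r • ((0:EuclideanSpace ℝ (Fin n × Fin n × Bool)), (1:ℝ)) := by
          rw [Prod.ext_iff]
          constructor
          · simp
          · simp
        rw [h1, map_add, _root_.map_smul, smul_eq_mul]
        rfl
      have hc0 : 0 ≤ c := by
        have hmem : ((0:EuclideanSpace ℝ (Fin n × Fin n × Bool)), (-1:ℝ)) ∈ A := by
          refine ⟨0, fun d => Matrix.PosSemidef.zero, by simp, by simp⟩
        have := hfle _ hmem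
        rw [hsplit, map_zero, zero_add] at this
        linarith
      -- Riesz representation
      set yv : EuclideanSpace ℝ (Fin n × Fin n × Bool) :=
        (InnerProductSpace.toDual ℝ (EuclideanSpace ℝ (Fin n × Fin n × Bool))).symm g0 with hyv
      have hyvapp : ∀ z, (inner ℝ yv z : ℝ) = g0 z := fun z =>
        InnerProductSpace.toDual_symm_apply
      obtain ⟨H, hHmem, hTH⟩ := Submodule.mem_map.mp (hπmem yv)
      have hHherm : H.IsHermitian := hSspHerm H hHmem
      have hg0π : ∀ x : Matrix (Fin n) (Fin n) ℂ, g0 (pr (T x)) = ((H * x).trace).re := by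
        intro x
        calc g0 (pr (T x)) = (inner ℝ yv (pr (T x)) : ℝ) := (hyvapp _).symm
          _ = (inner ℝ (pr yv) (T x) : ℝ) := (hπsym yv (T x)).symm
          _ = (inner ℝ (T H) (T x) : ℝ) := by rw [← hTH]; rfl
          _ = ((H * x).trace).re := hinner H hHherm x
      -- the master inequality
      have hmaster : ∀ M : D → Matrix (Fin n) (Fin n) ℂ, (∀ d, (M d).PosSemidef) →
          ((H * ∑ d, M d).trace).re + (payL a M) * c ≤ 0 := by
        intro M hM
        have := hfle (pr (T (∑ d, M d)), payL a M) ⟨M, hM, rfl, le_rfl⟩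
        rwa [hsplit, hg0π] at this
      -- rank-one specialization
      have hrank : ∀ (d : D) (v : Fin n → ℂ),
          (star v ⬝ᵥ (H *ᵥ v)).re + c * (star v ⬝ᵥ (a d *ᵥ v)).re ≤ 0 := by
        intro d v
        have hXpsd : (vecMulVec v (star v)).PosSemidef := vecMulVec_star_psd v
        set Msing : D → Matrix (Fin n) (Fin n) ℂ :=
          fun d' => if d' = d then vecMulVec v (star v) else 0 with hMsing
        have hMpsd : ∀ d', (Msing d').PosSemidef := by
          intro d'
          simp only [hMsing]
          rcases eq_or_ne d' d with h | h
          · rw [if_pos h]; exact hXpsd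
          · rw [if_neg h]; exact Matrix.PosSemidef.zero
        have h1 := hmaster Msing hMpsd
        have hsum : (∑ d', Msing d') = vecMulVec v (star v) := by
          simp only [hMsing]
          rw [Finset.sum_ite_eq' Finset.univ d
            (fun _ => vecMulVec v (star v)), if_pos (Finset.mem_univ d)]
        have hpayX : payL a Msing = ((vecMulVec v (star v) * a d).trace).re := by
          have h2 : payL a Msing = ∑ d', trRe (a d') (Msing d') := rfl
          rw [h2, Finset.sum_eq_single d]
          · simp [hMsing, trRe_apply]
          · intro d' _ h
            simp only [hMsing]
            simp only [if_neg h, map_zero]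
          · intro h; exact absurd (Finset.mem_univ d) h
        rw [hsum, hpayX, trace_mul_vecMulVec, trace_mul_comm, trace_mul_vecMulVec] at h1
        linarith
      -- negativity
      have hNpsd : ∀ d : D, ((-(H + c • a d)) : Matrix (Fin n) (Fin n) ℂ).PosSemidef := by
        intro d
        have hNherm : ((-(H + c • a d)) : Matrix (Fin n) (Fin n) ℂ).IsHermitian :=
          (hHherm.add (herm_real_smul c (ha_psd d).1)).neg
        refine PosSemidef.of_dotProduct_mulVec_nonneg hNherm fun v => ?_
        rw [zero_le_complex]
        refine ⟨?_, herm_dotProduct_im hNherm v⟩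
        have hexp : star v ⬝ᵥ ((-(H + c • a d)) *ᵥ v)
            = -(star v ⬝ᵥ (H *ᵥ v)) - (c:ℂ) * (star v ⬝ᵥ (a d *ᵥ v)) := by
          rw [neg_mulVec, dotProduct_neg, add_mulVec, dotProduct_add, real_smul_mat,
            smul_mulVec, dotProduct_smul, smul_eq_mul]
          ring
        rw [hexp]
        have := hrank d v
        simp only [Complex.sub_re, Complex.neg_re, Complex.mul_re, Complex.ofReal_re,
          Complex.ofReal_im, zero_mul, sub_zero]
        linarith
      -- the positivity of f at p
      have hfppos : 0 < ((H * bs).trace).re + (s + δ) * c := by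
        have := hfp
        rw [hp, hsplit, hg0π] at this
        linarith
      rcases eq_or_lt_of_le hc0 with hceq | hcpos
      · -- c = 0 : contradiction
        exfalso
        have h1 : ((-H : Matrix (Fin n) (Fin n) ℂ)).PosSemidef := by
          have := hNpsd d0
          rw [← hceq] at this
          simpa using this
        have h2 : 0 ≤ (((-H : Matrix (Fin n) (Fin n) ℂ) * bs).trace).re :=
          psd_trace_mul_re_nonneg h1 hbs.posSemidef
        rw [neg_mul, trace_neg, Complex.neg_re] at h2
        rw [← hceq] at hfppos
        simp at hfppos
        linarith
      · -- c > 0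
        set K : Matrix (Fin n) (Fin n) ℂ := (-(c⁻¹)) • H with hK
        have hKsub : ∀ d : D, ((K - a d) : Matrix (Fin n) (Fin n) ℂ).PosSemidef := by
          intro d
          have h1 : ((K - a d) : Matrix (Fin n) (Fin n) ℂ) = c⁻¹ • (-(H + c • a d)) := by
            rw [hK, smul_neg, smul_add, smul_smul, inv_mul_cancel₀ (ne_of_gt hcpos)]
            module
          rw [h1]
          exact psd_smul (inv_nonneg.mpr hc0) (hNpsd d)
        have hKpsd : K.PosSemidef := psd_of_sub (ha_psd d0) (hKsub d0)
        have hKmem : K ∈ Ssp := Submodule.smul_mem _ _ hHmem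
        set t : ℝ := ((K * bs).trace).re with htdef
        have ht0 : 0 ≤ t := psd_trace_mul_re_nonneg hKpsd hbs.posSemidef
        have hHK : ((H * bs).trace).re = -c * t := by
          have h1 : H = (-c) • K := by
            rw [hK, smul_smul]
            rw [show (-c) * (-(c⁻¹)) = c * c⁻¹ by ring, mul_inv_cancel₀ (ne_of_gt hcpos),
              one_smul]
          rw [h1, real_smul_mat, smul_mul_assoc, trace_smul, smul_eq_mul]
          simp [Complex.mul_re, htdef]
        have hts : t < s + δ := by
          rw [hHK] at hfppos
          nlinarith
        rcases eq_or_lt_of_le ht0 with hteq | htpos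
        · -- t = 0 : all a d vanish
          have hK0 : K = 0 := by
            refine psd_eq_zero_of_trace_mul hbs hKpsd ?_
            rw [trace_mul_comm]
            exact hteq.symm
          have had0 : ∀ d : D, a d = 0 := by
            intro d
            have h1 := hKsub d
            rw [hK0, zero_sub] at h1
            have h2 : (a d).trace = 0 := by
              have hpos := psd_trace_nonneg (ha_psd d)
              have hneg := psd_trace_nonneg h1
              rw [trace_neg] at hneg
              exact le_antisymm (neg_nonneg.mp hneg) hpos
            exact psd_trace_zero (ha_psd d) h2
          refine ⟨b0, hb0B, fun d => expDmax_le (by linarith) ?_⟩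
          rw [had0 d, sub_zero]
          exact psd_smul (by linarith) hb0.posSemidef
        · -- t > 0 : normalize
          set b : Matrix (Fin n) (Fin n) ℂ := t⁻¹ • K with hbdef
          have hbpsd : b.PosSemidef := psd_smul (inv_nonneg.mpr ht0) hKpsd
          have htb : t • b = K := by
            rw [hbdef, smul_smul, mul_inv_cancel₀ (ne_of_gt htpos), one_smul]
          have hbB : b ∈ B := by
            rw [hBmem]
            refine ⟨?_, hbpsd, ?_⟩
            · have hLK : K ∈ L := Submodule.span_le.mpr (fun x hx => hBsubL x hx) hKmem
              exact Submodule.smul_mem _ _ hLK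
            · have h1 : (b * bs).trace = (t⁻¹ : ℂ) * (K * bs).trace := by
                rw [hbdef, real_smul_mat, smul_mul_assoc, trace_smul, smul_eq_mul,
                  Complex.ofReal_inv]
              rw [h1]
              have h2 : (K * bs).trace = (t : ℂ) := by
                rw [Complex.ext_iff]
                constructor
                · simp [htdef]
                · simp [herm_trace_mul_real hKpsd.1 hbs.1]
              rw [h2, ← Complex.ofReal_inv, ← Complex.ofReal_mul,
                inv_mul_cancel₀ (ne_of_gt htpos), Complex.ofReal_one]
          refine ⟨b, hbB, fun d => expDmax_le (by linarith) ?_⟩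
          have hdecomp : ((s + δ) • b - a d : Matrix (Fin n) (Fin n) ℂ)
              = (s + δ - t) • b + (K - a d) := by
            rw [← htb]; module
          rw [hdecomp]
          exact (psd_smul (by linarith) hbpsd).add (hKsub d)
end

section
/- Let E = {σ_θ}_{θ∈Θ} be a finite family of quantum states on a finite-dimensional Hilbert space H, λ a prior probability on Θ, and (D, w) a classical decision problem. A POVM {M_d}_{d∈D} maximizes the average payoff Σ_{θ,d} λ_θ w(θ,d) Tr(σ_θ M_d) if and only if the operator q := Σ_d Σ_θ λ_θ w(θ,d) σ_θ M_d is Hermitian and satisfies Σ_θ λ_θ w(θ,d) σ_θ ≤ q for all d ∈ D. -/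
open Matrix ComplexOrder

variable {n : ℕ}

private lemma aux_eps {a k ε₀ : ℝ} (hε₀ : 0 < ε₀)
    (h : ∀ ε : ℝ, 0 < ε → ε ≤ ε₀ → 0 ≤ a + ε * k) : 0 ≤ a := by
  by_contra h'
  push_neg at h'
  have hk : 0 < |k| + 1 := by positivity
  have hna : 0 < -a := by linarith
  have hεpos : 0 < min ε₀ (-a / (2 * (|k| + 1))) := lt_min hε₀ (by positivity)
  have h1 := h _ hεpos (min_le_left _ _)
  set ε := min ε₀ (-a / (2 * (|k| + 1))) with hε
  have h2 : ε * k ≤ ε * |k| := mul_le_mul_of_nonneg_left (le_abs_self k) hεpos.le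
  have h3 : ε ≤ (-a / 2) / (|k| + 1) := (min_le_right _ _).trans_eq (div_div _ _ _).symm
  have h4 : ε * (|k| + 1) ≤ -a / 2 := (le_div_iff₀ hk).mp h3
  nlinarith

private lemma div_pos_step {ε X : ℝ} (hε : 0 < ε) (h : 0 ≤ 2*ε*X) : 0 ≤ X := by
  by_contra hg
  push_neg at hg
  have := mul_neg_of_pos_of_neg (show (0:ℝ) < 2*ε by linarith) hg
  linarith

private lemma scalar_step {m zre zim Sre rre ε : ℝ} (hm : 0 ≤ m) (hε : 0 < ε)
    (hεm : ε * m ≤ 1)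
    (h : 2 * ((-(ε^2*m)) * zre - ε * zim) + ((ε^2*m)^2 + ε^2) * Sre
      - (2 * (-(ε^2*m)) + ((ε^2*m)^2 + ε^2) * m) * rre ≤ 0) :
    0 ≤ zim + ε * (m * |zre| + |Sre| + m * |rre|) := by
  have hεm0 : 0 ≤ ε * m := mul_nonneg hε.le hm
  have e2m : ε^2*m^2 ≤ 1 := by nlinarith
  have hA : 0 ≤ ε^2*m*(|zre| - zre) :=
    mul_nonneg (mul_nonneg (sq_nonneg ε) hm) (by linarith [le_abs_self zre])
  have hB1 : 0 ≤ ((ε^2*m)^2 + ε^2)*(|Sre| + Sre) :=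
    mul_nonneg (by positivity) (by linarith [neg_abs_le Sre])
  have hB2 : 0 ≤ (ε^2 - (ε^2*m)^2)*|Sre| :=
    mul_nonneg (by nlinarith [sq_nonneg ε]) (abs_nonneg Sre)
  have hC1 : 0 ≤ (ε^2*m - (ε^2*m)^2*m)*(|rre| + rre) :=
    mul_nonneg (by nlinarith [mul_nonneg (sq_nonneg ε) hm])
      (by linarith [neg_abs_le rre])
  have hC2 : 0 ≤ (ε^2*m + (ε^2*m)^2*m)*|rre| :=
    mul_nonneg (by positivity) (abs_nonneg rre)
  have key : 0 ≤ 2*ε*zim + 2*ε^2*(m*|zre| + |Sre| + m*|rre|) := by nlinarith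
  exact div_pos_step hε (by nlinarith)

private lemma trace_nonneg_of_posSemidef {A : Matrix (Fin n) (Fin n) ℂ}
    (hA : A.PosSemidef) : 0 ≤ A.trace := by
  rw [Matrix.trace]
  apply Finset.sum_nonneg
  intro i _
  have h := hA.dotProduct_mulVec_nonneg (Pi.single i (1:ℂ))
  have hs : star (Pi.single i (1:ℂ)) = (Pi.single i (1:ℂ) : Fin n → ℂ) := by
    ext j; simp [Pi.single_apply, apply_ite (star ·)]
  simpa [hs, Matrix.mulVec_single, Matrix.diag, single_dotProduct] using h

open scoped MatrixOrder in
private lemma trace_mul_nonneg {A B : Matrix (Fin n) (Fin n) ℂ}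
    (hA : A.PosSemidef) (hB : B.PosSemidef) : 0 ≤ (A * B).trace := by
  have h1 : A * B = CFC.sqrt A * (CFC.sqrt A * B) := by
    rw [← Matrix.mul_assoc, CFC.sqrt_mul_sqrt_self A hA.nonneg]
  have h3 : (CFC.sqrt A * B * CFC.sqrt A).PosSemidef := by
    have h := hB.conjTranspose_mul_mul_same (B := CFC.sqrt A)
    rwa [(CFC.sqrt_nonneg A).posSemidef.isHermitian.eq] at h
  rw [Matrix.mul_assoc] at h3
  have h4 := trace_nonneg_of_posSemidef h3
  rw [Matrix.trace_mul_comm (CFC.sqrt A) (B * CFC.sqrt A), Matrix.mul_assoc] at h4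
  rwa [h1, ← Matrix.mul_assoc, Matrix.trace_mul_comm]

private lemma hP_herm (v : Fin n → ℂ) : (vecMulVec v (star v)).IsHermitian := by
  ext i j
  simp [Matrix.vecMulVec_apply, Matrix.conjTranspose_apply, mul_comm]

private lemma hP_sq (v : Fin n → ℂ) :
    vecMulVec v (star v) * vecMulVec v (star v) = (star v ⬝ᵥ v) • vecMulVec v (star v) := by
  ext i j
  simp [Matrix.vecMulVec_apply, Matrix.mul_apply, dotProduct, Finset.sum_mul,
    Finset.mul_sum]
  congr 1
  ext k
  ring

private lemma hP_psd (v : Fin n → ℂ) : (vecMulVec v (star v)).PosSemidef := by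
  refine Matrix.PosSemidef.of_dotProduct_mulVec_nonneg (hP_herm v) fun x => ?_
  have : star x ⬝ᵥ (vecMulVec v (star v) *ᵥ x) = star (star v ⬝ᵥ x) * (star v ⬝ᵥ x) := by
    simp [dotProduct, Matrix.mulVec, Matrix.vecMulVec_apply, Finset.mul_sum,
      Finset.sum_mul, star_sum]
    rw [Finset.sum_comm]
    congr 1; ext i; congr 1; ext j; ring
  rw [this]
  exact star_mul_self_nonneg _

private lemma smul_psd {P : Matrix (Fin n) (Fin n) ℂ} (hP : P.PosSemidef) {c : ℝ} (hc : 0 ≤ c) :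
    ((c:ℂ) • P).PosSemidef := by
  refine Matrix.PosSemidef.of_dotProduct_mulVec_nonneg ?_ fun x => ?_
  · ext i j
    simp [Matrix.conjTranspose_apply, hP.1.apply]
  · have h := hP.dotProduct_mulVec_nonneg x
    rw [Matrix.smul_mulVec, dotProduct_smul]
    exact mul_nonneg (by exact_mod_cast Complex.zero_le_real.mpr hc) h

private lemma mc_real (v : Fin n → ℂ) : star v ⬝ᵥ v = (((star v ⬝ᵥ v).re : ℝ) : ℂ) := by
  have : (starRingEnd ℂ) (star v ⬝ᵥ v) = star v ⬝ᵥ v := by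
    simp [dotProduct, map_sum]
    congr 1; ext i; ring
  exact (Complex.conj_eq_iff_re.mp this).symm

private lemma htrP (X : Matrix (Fin n) (Fin n) ℂ) (v : Fin n → ℂ) :
    (X * vecMulVec v (star v)).trace = star v ⬝ᵥ (X *ᵥ v) := by
  simp [Matrix.trace, Matrix.diag, Matrix.mul_apply, dotProduct, Matrix.mulVec,
    Matrix.vecMulVec_apply, Finset.mul_sum]
  congr 1; ext i; congr 1; ext j; ring

private lemma hconjquad (X : Matrix (Fin n) (Fin n) ℂ) (x : Fin n → ℂ) :
    star x ⬝ᵥ (Xᴴ *ᵥ x) = star (star x ⬝ᵥ (X *ᵥ x)) := by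
  simp [dotProduct, Matrix.mulVec, Matrix.conjTranspose_apply, star_sum, Finset.mul_sum]
  rw [Finset.sum_comm]
  congr 1; ext i; congr 1; ext j; ring

private lemma herm_of_quad_real {q : Matrix (Fin n) (Fin n) ℂ}
    (h : ∀ v : Fin n → ℂ, (star v ⬝ᵥ (q *ᵥ v)).im = 0) : q.IsHermitian := by
  have hT : ∀ v : Fin n → ℂ, star v ⬝ᵥ ((q - qᴴ) *ᵥ v) = 0 := by
    intro v
    rw [Matrix.sub_mulVec, dotProduct_sub, hconjquad]
    have h1 := h v
    set w := star v ⬝ᵥ (q *ᵥ v) with hw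
    rw [Complex.ext_iff]
    constructor
    · simp [Complex.sub_re, Complex.star_def]
    · simp [Complex.sub_im, Complex.star_def, h1]
  have hT0 : q - qᴴ = 0 := by
    have key : Matrix.toEuclideanLin (q - qᴴ) = 0 := by
      rw [← inner_map_self_eq_zero]
      intro x
      have h2 := hT ((WithLp.equiv 2 (Fin n → ℂ)) x)
      rw [PiLp.inner_apply]
      simp only [RCLike.inner_apply]
      have h3 : ∀ i, (Matrix.toEuclideanLin (q - qᴴ) x) i
          = ((q - qᴴ) *ᵥ ((WithLp.equiv 2 (Fin n → ℂ)) x)) i := fun i => rfl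
      calc ∑ i, x i * (starRingEnd ℂ) ((Matrix.toEuclideanLin (q - qᴴ) x) i)
          = ∑ i, (starRingEnd ℂ) (((q - qᴴ) *ᵥ ((WithLp.equiv 2 (Fin n → ℂ)) x)) i)
              * ((WithLp.equiv 2 (Fin n → ℂ)) x) i := by
            exact Finset.sum_congr rfl fun i _ => by rw [h3 i, mul_comm]; rfl
        _ = star (star ((WithLp.equiv 2 (Fin n → ℂ)) x) ⬝ᵥ
              ((q - qᴴ) *ᵥ ((WithLp.equiv 2 (Fin n → ℂ)) x))) := by
            rw [dotProduct, star_sum]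
            refine Finset.sum_congr rfl fun i _ => ?_
            rw [star_mul', Pi.star_apply, star_star, Complex.star_def]
            ring
        _ = 0 := by rw [h2, star_zero]
    have := Matrix.toEuclideanLin.injective
      (by rw [key, map_zero] : Matrix.toEuclideanLin (q - qᴴ) = Matrix.toEuclideanLin 0)
    exact this
  exact (sub_eq_zero.mp hT0).symm

private lemma key_ineq {D : Type*} [Fintype D]
    (R M : D → Matrix (Fin n) (Fin n) ℂ)
    (hR : ∀ d, (R d).IsHermitian)
    (hMpos : ∀ d, (M d).PosSemidef) (hMsum : ∑ d, M d = 1)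
    (hopt : ∀ N : D → Matrix (Fin n) (Fin n) ℂ,
        (∀ d, (N d).PosSemidef) → ∑ d, N d = 1 →
        ∑ d, ((R d) * (N d)).trace.re ≤ ∑ d, ((R d) * (M d)).trace.re)
    (v : Fin n → ℂ) (d0 : D) (β : ℂ)
    (hβ : 2 * β.re + Complex.normSq β * (star v ⬝ᵥ v).re ≤ 0) :
    2 * (β * ((∑ d, R d * M d) * vecMulVec v (star v)).trace).re
      + Complex.normSq β *
        (∑ d, (R d * (vecMulVec v (star v) * (M d * vecMulVec v (star v)))).trace).re
      - (2 * β.re + Complex.normSq β * (star v ⬝ᵥ v).re)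
        * ((R d0 * vecMulVec v (star v)).trace).re ≤ 0 := by
  classical
  set P := vecMulVec v (star v) with hPdef
  set m := (star v ⬝ᵥ v).re with hm
  have hmc : star v ⬝ᵥ v = (m : ℂ) := mc_real v
  set treal := 2 * β.re + Complex.normSq β * m with htreal
  set z := ((∑ d, R d * M d) * P).trace with hz
  set S := (∑ d, (R d * (P * (M d * P))).trace) with hS
  set r := (R d0 * P).trace with hr
  set B : Matrix (Fin n) (Fin n) ℂ := 1 + β • P with hB
  have hBH : Bᴴ = 1 + (star β) • P := by
    simp [hB, hPdef, Matrix.conjTranspose_add, Matrix.conjTranspose_smul, (hP_herm v).eq]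
  set N : D → Matrix (Fin n) (Fin n) ℂ :=
    fun d => Bᴴ * M d * B + (if d = d0 then ((-treal : ℝ) : ℂ) • P else 0) with hN
  have hNpos : ∀ d, (N d).PosSemidef := by
    intro d
    refine Matrix.PosSemidef.add ((hMpos d).conjTranspose_mul_mul_same B) ?_
    split_ifs with h
    · exact smul_psd (hP_psd v) (by linarith)
    · exact Matrix.PosSemidef.zero
  have hτc : β + star β + star β * β * (m : ℂ) = ((treal : ℝ) : ℂ) := by
    rw [htreal]
    push_cast
    simp only [Complex.star_def]
    rw [Complex.add_conj, ← Complex.normSq_eq_conj_mul_self]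
    push_cast
    ring
  have hBB : Bᴴ * B = 1 + ((treal : ℝ) : ℂ) • P := by
    rw [hBH, hB, Matrix.add_mul, Matrix.one_mul, Matrix.mul_add, Matrix.mul_one,
      smul_mul_assoc, mul_smul_comm, smul_smul, hP_sq v, hmc, smul_smul, ← hτc]
    module
  have hNsum : ∑ d, N d = 1 := by
    rw [hN]
    rw [Finset.sum_add_distrib]
    have h1 : ∑ d, Bᴴ * M d * B = Bᴴ * B := by
      rw [← Finset.sum_mul, ← Finset.mul_sum, hMsum, Matrix.mul_one]
    have h2 : (∑ d, if d = d0 then ((-treal : ℝ) : ℂ) • P else 0) = ((-treal : ℝ) : ℂ) • P := by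
      simp
    rw [h1, h2, hBB]
    push_cast
    module
  have hcore : ∀ d, R d * (Bᴴ * M d * B) =
      R d * M d + β • (R d * (M d * P)) + star β • (R d * (P * M d))
        + (star β * β) • (R d * (P * (M d * P))) := by
    intro d
    rw [hBH, hB]
    simp only [Matrix.add_mul, Matrix.mul_add, Matrix.one_mul, Matrix.mul_one,
      smul_mul_assoc, mul_smul_comm, smul_smul, Matrix.mul_assoc]
    module
  have htr : ∀ d, (R d * N d).trace =
      (R d * M d).trace + β * (R d * (M d * P)).trace + star β * (R d * (P * M d)).trace
        + (star β * β) * (R d * (P * (M d * P))).trace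
        + (if d = d0 then ((-treal : ℝ) : ℂ) * (R d0 * P).trace else 0) := by
    intro d
    rw [hN]
    simp only []
    rw [Matrix.mul_add, Matrix.trace_add, hcore d]
    rw [Matrix.trace_add, Matrix.trace_add, Matrix.trace_add, Matrix.trace_smul,
      Matrix.trace_smul, Matrix.trace_smul, smul_eq_mul, smul_eq_mul, smul_eq_mul]
    congr 1
    split_ifs with h
    · subst h
      rw [Matrix.mul_smul, Matrix.trace_smul, smul_eq_mul]
    · simp
  have hz1 : ∑ d, (R d * (M d * P)).trace = z := by
    calc ∑ d, (R d * (M d * P)).trace = ∑ d, ((R d * M d) * P).trace := by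
          simp_rw [Matrix.mul_assoc]
      _ = z := by rw [← Matrix.trace_sum, ← Finset.sum_mul, hz]
  have hz2 : ∑ d, (R d * (P * M d)).trace = star z := by
    have e1 : ∀ d : D, (R d * (P * M d)).trace = ((M d * R d) * P).trace := by
      intro d
      rw [← Matrix.mul_assoc, Matrix.trace_mul_comm, ← Matrix.mul_assoc]
    rw [Finset.sum_congr rfl fun d _ => e1 d, ← Matrix.trace_sum, ← Finset.sum_mul]
    have hq' : (∑ d, M d * R d) = (∑ d, R d * M d)ᴴ := by
      rw [Matrix.conjTranspose_sum]
      exact Finset.sum_congr rfl fun d _ => by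
        rw [Matrix.conjTranspose_mul, (hR d).eq, (hMpos d).1.eq]
    have hPH : Pᴴ = P := (hP_herm v).eq
    rw [hq', hz]
    rw [← hPH, ← Matrix.conjTranspose_mul, Matrix.trace_conjTranspose,
      Matrix.trace_mul_comm, hPH]
  have hsum1 : ∑ d, (R d * N d).trace =
      (∑ d, (R d * M d).trace) + β * z + star β * star z + (star β * β) * S
        + ((-treal : ℝ) : ℂ) * r := by
    rw [Finset.sum_congr rfl fun d _ => htr d]
    rw [Finset.sum_add_distrib, Finset.sum_add_distrib, Finset.sum_add_distrib,
      Finset.sum_add_distrib]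
    rw [← Finset.mul_sum, ← Finset.mul_sum, ← Finset.mul_sum]
    rw [hz1, hz2, Finset.sum_ite_eq' Finset.univ d0, if_pos (Finset.mem_univ d0), ← hS, ← hr]
  have hre := hopt N hNpos hNsum
  rw [← Complex.re_sum, ← Complex.re_sum, hsum1] at hre
  have hstar : star β * star z = star (β * z) := (star_mul' β z).symm
  rw [hstar] at hre
  have e2 : ((∑ d, (R d * M d).trace) + β * z + star (β * z) + (star β * β) * S
      + ((-treal : ℝ) : ℂ) * r).re
      = (∑ d, (R d * M d).trace).re + 2 * (β * z).re + Complex.normSq β * S.re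
        - treal * r.re := by
    simp only [Complex.add_re]
    have h3 : (star β * β * S).re = Complex.normSq β * S.re := by
      calc (star β * β * S).re = (((Complex.normSq β : ℝ) : ℂ) * S).re := by
            rw [Complex.normSq_eq_conj_mul_self]; simp [Complex.star_def]
        _ = Complex.normSq β * S.re := Complex.re_ofReal_mul _ _
    have h4 : (((-treal : ℝ) : ℂ) * r).re = -(treal * r.re) := by
      push_cast
      rw [neg_mul, Complex.neg_re, Complex.re_ofReal_mul]
    have h5 : (star (β * z)).re = (β * z).re := by simp [Complex.star_def]
    rw [h3, h4, h5]
    ring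
  rw [e2] at hre
  linarith

private lemma herm_of_opt {D : Type*} [Fintype D] [Nonempty D]
    (R M : D → Matrix (Fin n) (Fin n) ℂ)
    (hR : ∀ d, (R d).IsHermitian)
    (hMpos : ∀ d, (M d).PosSemidef) (hMsum : ∑ d, M d = 1)
    (hopt : ∀ N : D → Matrix (Fin n) (Fin n) ℂ,
        (∀ d, (N d).PosSemidef) → ∑ d, N d = 1 →
        ∑ d, ((R d) * (N d)).trace.re ≤ ∑ d, ((R d) * (M d)).trace.re) :
    (∑ d, R d * M d).IsHermitian := by
  apply herm_of_quad_real
  intro v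
  rw [← htrP]
  set d0 := Classical.arbitrary D
  set m := (star v ⬝ᵥ v).re with hm
  have hm0 : 0 ≤ m := by
    have h := dotProduct_star_self_nonneg v
    exact (Complex.le_def.mp h).1
  set z := ((∑ d, R d * M d) * vecMulVec v (star v)).trace with hz
  set S := (∑ d, (R d * (vecMulVec v (star v) * (M d * vecMulVec v (star v)))).trace) with hS
  set r := ((R d0 * vecMulVec v (star v))).trace with hr
  have hstep : ∀ (s : ℝ), s = 1 ∨ s = -1 → ∀ ε : ℝ, 0 < ε → ε ≤ 1/(m+1) →
      0 ≤ s * z.im + ε * (m * |z.re| + |S.re| + m * |r.re|) := by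
    intro s hs ε hε hεle
    have hm1 : (0:ℝ) < m + 1 := by linarith
    have hε1 : ε ≤ 1 := hεle.trans (by rw [div_le_one hm1]; linarith)
    have hεm : ε * m ≤ 1 := by
      have := (le_div_iff₀ hm1).mp hεle
      nlinarith
    have e2m : ε^2*m^2 ≤ 1 := by nlinarith [mul_nonneg hε.le hm0]
    set β : ℂ := ((-(ε^2*m) : ℝ) : ℂ) + ((s*ε : ℝ) : ℂ) * Complex.I with hβdef
    have hβre : β.re = -(ε^2*m) := by
      rw [hβdef]
      simp only [Complex.add_re, Complex.mul_re, Complex.ofReal_re, Complex.ofReal_im,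
        Complex.I_re, Complex.I_im]
      ring
    have hβim : β.im = s*ε := by
      rw [hβdef]
      simp only [Complex.add_im, Complex.mul_im, Complex.ofReal_re, Complex.ofReal_im,
        Complex.I_re, Complex.I_im]
      ring
    have hnsq : Complex.normSq β = (ε^2*m)^2 + ε^2 := by
      rw [Complex.normSq_apply, hβre, hβim]
      rcases hs with h | h <;> rw [h] <;> ring
    have hβcond : 2 * β.re + Complex.normSq β * m ≤ 0 := by
      rw [hβre, hnsq]
      nlinarith [mul_le_mul_of_nonneg_left e2m (mul_nonneg (sq_nonneg ε) hm0)]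
    have hkey' := key_ineq R M hR hMpos hMsum hopt v d0 β hβcond
    have hkey : 2 * (β * z).re + Complex.normSq β * S.re
        - (2 * β.re + Complex.normSq β * m) * r.re ≤ 0 := hkey'
    rw [hβre, hnsq] at hkey
    have h2 : (β*z).re = (-(ε^2*m))*z.re - (s*ε)*z.im := by
      rw [Complex.mul_re, hβre, hβim]
    rw [h2] at hkey
    rcases hs with h | h
    · subst h
      have := scalar_step (m := m) (zre := z.re) (zim := z.im) (Sre := S.re) (rre := r.re)
        hm0 hε hεm (by linarith [hkey])
      linarith [this]
    · subst h
      have := scalar_step (m := m) (zre := z.re) (zim := -z.im) (Sre := S.re) (rre := r.re)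
        hm0 hε hεm (by linarith [hkey])
      linarith [this]
  have hp1 : 0 ≤ z.im := by
    refine aux_eps (a := z.im) (k := m * |z.re| + |S.re| + m * |r.re|)
      (ε₀ := 1/(m+1)) (by positivity) ?_
    intro ε h1 h2
    have := hstep 1 (Or.inl rfl) ε h1 h2
    linarith [this]
  have hp2 : 0 ≤ -z.im := by
    refine aux_eps (a := -z.im) (k := m * |z.re| + |S.re| + m * |r.re|)
      (ε₀ := 1/(m+1)) (by positivity) ?_
    intro ε h1 h2
    have := hstep (-1) (Or.inr rfl) ε h1 h2
    linarith [this]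
  linarith

private lemma psd_of_opt {D : Type*} [Fintype D]
    (R M : D → Matrix (Fin n) (Fin n) ℂ)
    (hR : ∀ d, (R d).IsHermitian)
    (hMpos : ∀ d, (M d).PosSemidef) (hMsum : ∑ d, M d = 1)
    (hopt : ∀ N : D → Matrix (Fin n) (Fin n) ℂ,
        (∀ d, (N d).PosSemidef) → ∑ d, N d = 1 →
        ∑ d, ((R d) * (N d)).trace.re ≤ ∑ d, ((R d) * (M d)).trace.re)
    (hherm : (∑ d, R d * M d).IsHermitian) (d0 : D) :
    ((∑ d, R d * M d) - R d0).PosSemidef := by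
  have hQh : ((∑ d, R d * M d) - R d0).IsHermitian := hherm.sub (hR d0)
  refine Matrix.PosSemidef.of_dotProduct_mulVec_nonneg hQh fun v => ?_
  set m := (star v ⬝ᵥ v).re with hm
  have hm0 : 0 ≤ m := by
    have h := dotProduct_star_self_nonneg v
    exact (Complex.le_def.mp h).1
  set z := ((∑ d, R d * M d) * vecMulVec v (star v)).trace with hz
  set S := (∑ d, (R d * (vecMulVec v (star v) * (M d * vecMulVec v (star v)))).trace) with hS
  set r := ((R d0 * vecMulVec v (star v))).trace with hr
  have hre : 0 ≤ z.re - r.re := by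
    refine aux_eps (a := z.re - r.re) (k := (m * r.re - S.re)/2)
      (ε₀ := 1/(m+1)) (by positivity) ?_
    intro ε hε hεle
    have hm1 : (0:ℝ) < m + 1 := by linarith
    have hεm : ε * m ≤ 1 := by
      have := (le_div_iff₀ hm1).mp hεle
      nlinarith
    set β : ℂ := ((-ε : ℝ) : ℂ) with hβdef
    have hβre : β.re = -ε := by rw [hβdef]; simp
    have hβim : β.im = 0 := by rw [hβdef]; simp
    have hnsq : Complex.normSq β = ε^2 := by
      rw [Complex.normSq_apply, hβre, hβim]; ring
    have hβcond : 2 * β.re + Complex.normSq β * m ≤ 0 := by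
      rw [hβre, hnsq]
      nlinarith [mul_nonneg hε.le hm0]
    have hkey' := key_ineq R M hR hMpos hMsum hopt v d0 β hβcond
    have hkey : 2 * (β * z).re + Complex.normSq β * S.re
        - (2 * β.re + Complex.normSq β * m) * r.re ≤ 0 := hkey'
    rw [hβre, hnsq] at hkey
    have h2 : (β*z).re = -ε*z.re := by rw [Complex.mul_re, hβre, hβim]; ring
    rw [h2] at hkey
    apply div_pos_step hε
    nlinarith [hkey]
  have hval : star v ⬝ᵥ (((∑ d, R d * M d) - R d0) *ᵥ v) = z - r := by
    rw [Matrix.sub_mulVec, dotProduct_sub, hz, hr, htrP, htrP]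
  have him : z.im - r.im = 0 := by
    have hq := hconjquad ((∑ d, R d * M d) - R d0) v
    rw [hQh.eq, hval] at hq
    have h5 := congrArg Complex.im hq
    simp only [Complex.star_def, Complex.conj_im, Complex.sub_im] at h5
    linarith
  rw [hval, Complex.le_def]
  constructor
  · simp only [Complex.zero_re, Complex.sub_re]
    linarith
  · simp only [Complex.zero_im, Complex.sub_im]
    linarith

private lemma suff_opt {D : Type*} [Fintype D]
    (R M : D → Matrix (Fin n) (Fin n) ℂ)
    (hpsd : ∀ d, ((∑ d', R d' * M d') - R d).PosSemidef) :
    ∀ N : D → Matrix (Fin n) (Fin n) ℂ,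
        (∀ d, (N d).PosSemidef) → ∑ d, N d = 1 →
        ∑ d, ((R d) * (N d)).trace.re ≤ ∑ d, ((R d) * (M d)).trace.re := by
  intro N hNpos hNsum
  set q := ∑ d', R d' * M d' with hq
  have h1 : ∀ d, ((R d) * (N d)).trace.re ≤ (q * (N d)).trace.re := by
    intro d
    have h2 : 0 ≤ ((q - R d) * N d).trace := trace_mul_nonneg (hpsd d) (hNpos d)
    have h3 : ((q - R d) * N d).trace = (q * N d).trace - ((R d) * (N d)).trace := by
      rw [Matrix.sub_mul, Matrix.trace_sub]
    have h4 := (Complex.le_def.mp h2).1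
    rw [h3] at h4
    simp only [Complex.sub_re, Complex.zero_re] at h4
    linarith
  calc ∑ d, ((R d) * (N d)).trace.re ≤ ∑ d, (q * (N d)).trace.re :=
        Finset.sum_le_sum (fun d _ => h1 d)
    _ = ∑ d, ((R d) * (M d)).trace.re := by
        rw [← Complex.re_sum, ← Matrix.trace_sum, ← Finset.mul_sum, hNsum, Matrix.mul_one,
          hq, Matrix.trace_sum, Complex.re_sum]

/-- A POVM `{M_d}` is optimal for the average payoff iff
`q = Σ_d Σ_θ λ_θ w(θ,d) σ_θ M_d` is Hermitian and `Σ_θ λ_θ w(θ,d) σ_θ ≤ q` for all `d`. -/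
theorem stmt19 {Θ D : Type*} [Fintype Θ] [Fintype D]
    (σ : Θ → Matrix (Fin n) (Fin n) ℂ)
    (hσ : ∀ θ, (σ θ).PosSemidef ∧ (σ θ).trace = 1)
    (lam : Θ → ℝ) (hlam0 : ∀ θ, 0 ≤ lam θ) (hlam1 : ∑ θ, lam θ = 1)
    (w : Θ → D → ℝ) (hw0 : ∀ θ d, 0 ≤ w θ d) (hw1 : ∀ θ d, w θ d ≤ 1)
    (M : D → Matrix (Fin n) (Fin n) ℂ)
    (hMpos : ∀ d, (M d).PosSemidef) (hMsum : ∑ d, M d = 1) :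
    (∀ N : D → Matrix (Fin n) (Fin n) ℂ,
        (∀ d, (N d).PosSemidef) → ∑ d, N d = 1 →
        ∑ θ, ∑ d, lam θ * w θ d * ((σ θ * N d).trace).re ≤
          ∑ θ, ∑ d, lam θ * w θ d * ((σ θ * M d).trace).re) ↔
      ((∑ d, ∑ θ, (lam θ * w θ d) • (σ θ * M d)).IsHermitian ∧
        ∀ d, ((∑ d', ∑ θ, (lam θ * w θ d') • (σ θ * M d')) -
          ∑ θ, (lam θ * w θ d) • σ θ).PosSemidef) := by
  set R : D → Matrix (Fin n) (Fin n) ℂ := fun d => ∑ θ, (lam θ * w θ d) • σ θ with hRdef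
  have hRherm : ∀ d, (R d).IsHermitian := by
    intro d
    show (R d)ᴴ = R d
    rw [hRdef]
    simp only []
    rw [Matrix.conjTranspose_sum]
    refine Finset.sum_congr rfl fun θ _ => ?_
    rw [Matrix.conjTranspose_smul, star_trivial, (hσ θ).1.1.eq]
  have hRd_mul : ∀ (d : D) (X : Matrix (Fin n) (Fin n) ℂ),
      R d * X = ∑ θ, (lam θ * w θ d) • (σ θ * X) := by
    intro d X
    rw [hRdef]
    simp only []
    rw [Finset.sum_mul]
    exact Finset.sum_congr rfl fun θ _ => smul_mul_assoc _ _ _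
  have hq_eq : (∑ d, ∑ θ, (lam θ * w θ d) • (σ θ * M d)) = ∑ d, R d * M d :=
    Finset.sum_congr rfl fun d _ => (hRd_mul d (M d)).symm
  have hpayoff : ∀ N : D → Matrix (Fin n) (Fin n) ℂ,
      ∑ θ, ∑ d, lam θ * w θ d * ((σ θ * N d).trace).re
        = ∑ d, ((R d) * (N d)).trace.re := by
    intro N
    rw [Finset.sum_comm]
    refine Finset.sum_congr rfl fun d _ => ?_
    rw [hRd_mul d (N d), Matrix.trace_sum, Complex.re_sum]
    refine Finset.sum_congr rfl fun θ _ => ?_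
    rw [Matrix.trace_smul, Complex.real_smul, Complex.re_ofReal_mul]
  constructor
  · intro hopt
    have hopt' : ∀ N : D → Matrix (Fin n) (Fin n) ℂ,
        (∀ d, (N d).PosSemidef) → ∑ d, N d = 1 →
        ∑ d, ((R d) * (N d)).trace.re ≤ ∑ d, ((R d) * (M d)).trace.re := by
      intro N h1 h2
      rw [← hpayoff N, ← hpayoff M]
      exact hopt N h1 h2
    rcases isEmpty_or_nonempty D with hD | hD
    · constructor
      · rw [hq_eq]
        rw [Finset.univ_eq_empty, Finset.sum_empty]
        exact Matrix.isHermitian_zero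
      · exact fun d => (IsEmpty.false d).elim
    · have hherm := herm_of_opt R M hRherm hMpos hMsum hopt'
      constructor
      · rw [hq_eq]; exact hherm
      · intro d
        have := psd_of_opt R M hRherm hMpos hMsum hopt' hherm d
        rw [hq_eq]
        exact this
  · rintro ⟨hherm, hpsd⟩ N h1 h2
    rw [hpayoff N, hpayoff M]
    refine suff_opt R M ?_ N h1 h2
    intro d
    have := hpsd d
    rw [hq_eq] at this
    exact this
end
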